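/- arXiv:2601.09825 — 10 statements merged into one kernel-verified Lean document; each statement's English description precedes it below -/
import Mathlib

section
/- For all real x, y, z > 0 with y ≤ z, one has x − z ≤ 3·√(z·Δ(x,y)) + 6·Δ(x,y). -/
/-- Triangular discrimination: `Δ(0,0) = 0` and `Δ(p,q) = (p-q)²/(p+q)` otherwise. -/
noncomputable def tdisc (p q : ℝ) : ℝ := if p = 0 ∧ q = 0 then 0 else (p - q)^2 / (p + q)

theorem stmt2 (x y z : ℝ) (hx : 0 < x) (hy : 0 < y) (hz : 0 < z) (hyz : y ≤ z) :
    x - z ≤ 3 * Real.sqrt (z * tdisc x y) + 6 * tdisc x y := by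
  have hxy : 0 < x + y := by linarith
  have hΔ : tdisc x y = (x - y)^2 / (x + y) := by
    unfold tdisc; simp [hx.ne']
  have hΔ0 : 0 ≤ tdisc x y := by
    rw [hΔ]; positivity
  have hsq : 0 ≤ Real.sqrt (z * tdisc x y) := Real.sqrt_nonneg _
  rcases le_or_gt x y with h | h
  · nlinarith
  · set d := x - y with hd
    have hdpos : 0 < d := by simp [hd]; linarith
    rcases le_or_gt d (2 * z) with h2 | h2
    · -- x + y ≤ 4z, so z * Δ ≥ (d/2)^2
      have hle : (d / 2)^2 ≤ z * tdisc x y := by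
        rw [hΔ, hd, div_pow, ← mul_div_assoc, div_le_div_iff₀ (by norm_num) hxy]
        nlinarith
      have : d / 2 ≤ Real.sqrt (z * tdisc x y) := by
        have := Real.sqrt_le_sqrt hle
        rwa [Real.sqrt_sq (by linarith)] at this
      nlinarith
    · -- x + y < 2d, so Δ ≥ d/2
      have hle : d / 2 ≤ tdisc x y := by
        rw [hΔ, le_div_iff₀ hxy]
        nlinarith
      nlinarith
end

section
/- For every q ∈ [0,1] and p ∈ (0,1), Δ(p,q) ≤ (2 / log₂ e) · ( q·log(q/p) + (1−q)·log((1−q)/(1−p)) ), where logarithms are natural and the convention 0·log 0 = 0 is used; the bracketed quantity is the Kullback–Leibler divergence KL(Bernoulli(q) ‖ Bernoulli(p)). -/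
lemma key1 {x : ℝ} (hx : 1 ≤ x) : 2 * Real.log x ≤ x - x⁻¹ := by
  have hder : ∀ y : ℝ, 1 < y → HasDerivAt (fun y : ℝ => y - 1/y - 2 * Real.log y)
      (1 - (-(1/y^2)) - 2 * (1/y)) y := by
    intro y hy
    have hy0 : y ≠ 0 := by linarith
    have h1 : HasDerivAt (fun y : ℝ => 1/y) (-(1/y^2)) y := by
      simpa [one_div] using (hasDerivAt_inv hy0)
    have h2 : HasDerivAt (fun y : ℝ => 2 * Real.log y) (2 * (1/y)) y := by
      simpa [one_div] using (Real.hasDerivAt_log hy0).const_mul 2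
    exact ((hasDerivAt_id y).sub h1).sub h2
  have hmono : MonotoneOn (fun y : ℝ => y - 1/y - 2 * Real.log y) (Set.Ici 1) := by
    apply monotoneOn_of_deriv_nonneg (convex_Ici 1)
    · apply ContinuousOn.sub (ContinuousOn.sub continuousOn_id ?_) ?_
      · exact ContinuousOn.div continuousOn_const continuousOn_id
          (fun y hy => by simp only [Set.mem_Ici] at hy; intro h; simp [h] at hy; linarith)
      · exact (Real.continuousOn_log.mono (by intro y hy; simp only [Set.mem_Ici] at hy; simp; intro h; rw [h] at hy; linarith)).const_smul 2 |>.congr (fun y hy => by simp [smul_eq_mul])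
    · intro y hy
      rw [interior_Ici] at hy
      exact (hder y hy).differentiableAt.differentiableWithinAt
    · intro y hy
      rw [interior_Ici] at hy
      simp only [Set.mem_Ioi] at hy
      rw [(hder y hy).deriv]
      have hy0 : y ≠ 0 := by linarith
      have : 1 - (-(1/y^2)) - 2 * (1/y) = (1 - 1/y)^2 := by field_simp; ring
      rw [this]; positivity
  have := hmono (Set.mem_Ici.mpr le_rfl) (Set.mem_Ici.mpr hx) hx
  simp only [Real.log_one, one_div] at this
  norm_num at this
  linarith

lemma key2 {t : ℝ} (ht : 1 ≤ t) : 2*(t-1)/(t+1) ≤ Real.log t := by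
  have hder : ∀ y : ℝ, 1 < y → HasDerivAt (fun y : ℝ => Real.log y - 2*(y-1)/(y+1))
      (1/y - (2*(y+1) - 2*(y-1)*1)/(y+1)^2) y := by
    intro y hy
    have hy0 : y ≠ 0 := by linarith
    have hy1 : y + 1 ≠ 0 := by linarith
    have h1 : HasDerivAt (fun y : ℝ => Real.log y) (1/y) y := by
      simpa [one_div] using Real.hasDerivAt_log hy0
    have h2 : HasDerivAt (fun y : ℝ => 2*(y-1)/(y+1))
        ((2*(y+1) - 2*(y-1)*1)/(y+1)^2) y := by
      exact HasDerivAt.div (by simpa using ((hasDerivAt_id y).sub_const 1).const_mul 2)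
        (by simpa using (hasDerivAt_id y).add_const 1) hy1
    exact h1.sub h2
  have hmono : MonotoneOn (fun y : ℝ => Real.log y - 2*(y-1)/(y+1)) (Set.Ici 1) := by
    apply monotoneOn_of_deriv_nonneg (convex_Ici 1)
    · apply ContinuousOn.sub
      · exact Real.continuousOn_log.mono (by intro y hy; simp only [Set.mem_Ici] at hy; simp; intro h; rw [h] at hy; linarith)
      · exact ContinuousOn.div (by fun_prop) (by fun_prop)
          (fun y hy => by simp only [Set.mem_Ici] at hy; intro h; linarith)
    · intro y hy
      rw [interior_Ici] at hy
      exact (hder y hy).differentiableAt.differentiableWithinAt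
    · intro y hy
      rw [interior_Ici] at hy
      simp only [Set.mem_Ioi] at hy
      rw [(hder y hy).deriv]
      have hy0 : y ≠ 0 := by linarith
      have hy1 : y + 1 ≠ 0 := by linarith
      have : 1/y - (2*(y+1) - 2*(y-1)*1)/(y+1)^2 = (y-1)^2/(y*(y+1)^2) := by
        field_simp; ring
      rw [this]
      have : 0 < y := by linarith
      positivity
  have := hmono (Set.mem_Ici.mpr le_rfl) (Set.mem_Ici.mpr ht) ht
  simp only [Real.log_one] at this
  norm_num at this
  linarith


/-- The binary logarithm of `e`, i.e. `log₂ e = 1 / log 2`. -/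
noncomputable def logTwoE : ℝ := 1 / Real.log 2

/-- Log-loss triangle condition: `Δ(p,q) ≤ (2 / log₂ e) · KL(Bernoulli(q) ‖ Bernoulli(p))`.
Logarithms are natural; the convention `0 · log 0 = 0` is automatic since `0 * x = 0`
and `Real.log 0 = 0` in Lean. -/
theorem stmt3 (q p : ℝ) (hq : q ∈ Set.Icc (0:ℝ) 1) (hp : p ∈ Set.Ioo (0:ℝ) 1) :
    tdisc p q ≤ (2 / logTwoE) *
      (q * Real.log (q / p) + (1 - q) * Real.log ((1 - q) / (1 - p))) := by
  obtain ⟨hp0, hp1⟩ := hp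
  obtain ⟨hq0, hq1⟩ := hq
  have hl2 : (0.6931:ℝ) < Real.log 2 := by
    have := Real.log_two_gt_d9; linarith
  have hL : 0 < Real.log 2 := by linarith
  have hc : 2 / logTwoE = 2 * Real.log 2 := by
    unfold logTwoE; field_simp
  have htd : tdisc p q = (p-q)^2/(p+q) := by
    unfold tdisc; rw [if_neg]; rintro ⟨h, -⟩; linarith
  rw [hc, htd]
  -- second term bound
  have hB : p - q ≤ (1 - q) * Real.log ((1 - q) / (1 - p)) := by
    rcases eq_or_lt_of_le hq1 with h1 | h1
    · rw [← h1]; simp; linarith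
    · have h1q : 0 < 1 - q := by linarith
      have h1p : 0 < 1 - p := by linarith
      have := Real.log_le_sub_one_of_pos (x := (1-p)/(1-q)) (by positivity)
      have hrev : 1 - (1-p)/(1-q) ≤ Real.log ((1-q)/(1-p)) := by
        rw [Real.log_div h1q.ne' h1p.ne'] at *
        rw [Real.log_div h1p.ne' h1q.ne'] at this
        linarith
      have := mul_le_mul_of_nonneg_left hrev h1q.le
      have he : (1-q) * (1 - (1-p)/(1-q)) = p - q := by field_simp; ring
      linarith [he ▸ this]
  -- main inequality with linearized second term
  have main : (p-q)^2/(p+q) ≤ 2*Real.log 2 * (q * Real.log (q/p) + (p - q)) := by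
    rcases eq_or_lt_of_le hq0 with h0 | h0
    · -- q = 0
      rw [← h0]
      simp only [zero_mul, sub_zero, add_zero, zero_add]
      rw [sq, mul_div_assoc, div_self hp0.ne', mul_one]
      nlinarith
    rcases le_or_gt p q with hle | hlt
    · -- p ≤ q : use key2
      have hk := key2 (t := q/p) ((one_le_div hp0).mpr hle)
      have he : 2*(q/p-1)/(q/p+1) = 2*(q-p)/(q+p) := by
        rw [div_eq_div_iff (by positivity) (by positivity)]
        field_simp
      rw [he] at hk
      have h1 : (p-q)^2/(p+q) = q * (2*(q-p)/(q+p)) + (p - q) := by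
        field_simp
        ring
      have h2 : q * (2*(q-p)/(q+p)) ≤ q * Real.log (q/p) :=
        mul_le_mul_of_nonneg_left hk h0.le
      have h3 : 0 ≤ q * Real.log (q/p) + (p - q) := by
        have h4 : 0 ≤ (p-q)^2/(p+q) := by positivity
        rw [h1] at h4; linarith
      nlinarith
    · -- 0 < q < p : use key1 with x = sqrt (p/q)
      obtain ⟨x, hx1, hx2, hlog⟩ : ∃ x:ℝ, 1 ≤ x ∧ x^2 * q = p ∧ Real.log (p/q) ≤ x - x⁻¹ := by
        refine ⟨Real.sqrt (p/q), Real.one_le_sqrt.mpr ((one_le_div h0).mpr hlt.le), ?_, ?_⟩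
        · rw [Real.sq_sqrt (by positivity)]; field_simp
        · have h5 := key1 (x := Real.sqrt (p/q)) (Real.one_le_sqrt.mpr ((one_le_div h0).mpr hlt.le))
          rw [Real.log_sqrt (by positivity : (0:ℝ) ≤ p/q)] at h5
          linarith
      have hx0 : 0 < x := by linarith
      have hlq : q * (x⁻¹ - x) ≤ q * Real.log (q/p) := by
        have hneg : Real.log (q/p) = - Real.log (p/q) := by
          rw [Real.log_div h0.ne' hp0.ne', Real.log_div hp0.ne' h0.ne']; ring
        rw [hneg]
        have := mul_le_mul_of_nonneg_left hlog h0.le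
        nlinarith
      have hkey : x*(x+1) ≤ 2*Real.log 2*(x^2+1) := by
        nlinarith [sq_nonneg (x - 1.3), hl2, hx0.le]
      have hgoal : (p-q)^2/(p+q) ≤ 2*Real.log 2 * (q * (x⁻¹ - x) + (p - q)) := by
        rw [div_le_iff₀ (by positivity)]
        rw [← mul_le_mul_iff_right₀ hx0]
        have h8 : x * (2*Real.log 2 * (q*(x⁻¹ - x) + (p - q)) * (p + q)) =
            2*Real.log 2 * (q*(x-1)^2*(x+1)) * (q*(x^2+1)) := by
          rw [← hx2]; field_simp; ring
        rw [h8]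
        have h9 := mul_le_mul_of_nonneg_right hkey
          (show 0 ≤ q^2*(x-1)^2*(x+1) by positivity)
        rw [← hx2]
        nlinarith [h9]
      calc (p-q)^2/(p+q) ≤ 2*Real.log 2 * (q * (x⁻¹ - x) + (p - q)) := hgoal
        _ ≤ 2*Real.log 2 * (q * Real.log (q/p) + (p - q)) := by nlinarith
  nlinarith [mul_le_mul_of_nonneg_left hB (by linarith : (0:ℝ) ≤ 2*Real.log 2)]
end

section
/- For every q ∈ [0,1] and p ∈ (0,1], Δ(p,q) ≤ (4·√e / log₂ e) · ( p − q + q·log(q/p) ), where logarithms are natural and the convention 0·log 0 = 0 is used; the bracketed quantity is the Kullback–Leibler divergence between Poisson distributions with means q and p. -/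
/-- Poisson loss triangle condition:
`Δ(p,q) ≤ (4√e / log₂ e) · KL(Poisson(q) ‖ Poisson(p))`.
Logarithms are natural; the convention `0 · log 0 = 0` is automatic since `0 * x = 0`
and `Real.log 0 = 0` in Lean. -/
theorem stmt4 (q p : ℝ) (hq : q ∈ Set.Icc (0:ℝ) 1) (hp : p ∈ Set.Ioc (0:ℝ) 1) :
    tdisc p q ≤ (4 * Real.sqrt (Real.exp 1) / logTwoE) *
      (p - q + q * Real.log (q / p)) := by
  obtain ⟨hq0, hq1⟩ := hq
  obtain ⟨hp0, hp1⟩ := hp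
  set s := Real.sqrt p with hs
  set t := Real.sqrt q with ht
  have hs0 : 0 < s := Real.sqrt_pos.mpr hp0
  have ht0 : 0 ≤ t := Real.sqrt_nonneg q
  have hsp : s ^ 2 = p := Real.sq_sqrt hp0.le
  have htq : t ^ 2 = q := Real.sq_sqrt hq0
  -- KL lower bound: p - q + q log(q/p) ≥ (s - t)^2
  have hKL : (s - t) ^ 2 ≤ p - q + q * Real.log (q / p) := by
    rcases eq_or_lt_of_le hq0 with hq0' | hq0'
    · simp only [← hq0']
      have : t = 0 := by simp [ht, ← hq0']
      rw [this]
      nlinarith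
    · have htpos : 0 < t := Real.sqrt_pos.mpr hq0'
      have hlog : Real.log (s / t) ≤ s / t - 1 :=
        Real.log_le_sub_one_of_pos (by positivity)
      have h2 : Real.log (q / p) = -2 * Real.log (s / t) := by
        rw [Real.log_div hq0'.ne' hp0.ne', Real.log_div hs0.ne' htpos.ne',
          ← hsp, ← htq, Real.log_pow, Real.log_pow]
        push_cast; ring
      rw [h2]
      have h3 : q * (s / t) = t * s := by
        field_simp [← htq]; rw [← htq]
      have h4 : q * Real.log (s / t) ≤ q * (s / t - 1) :=
        mul_le_mul_of_nonneg_left hlog hq0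
      nlinarith [h4, h3, htq, hsp]
  have hnn : (0:ℝ) ≤ p - q + q * Real.log (q / p) :=
    le_trans (by positivity) hKL
  -- Δ ≤ 2 (s - t)^2
  have hpq : 0 < p + q := by linarith
  have htd : tdisc p q ≤ 2 * (s - t) ^ 2 := by
    rw [tdisc, if_neg (by rintro ⟨h, _⟩; exact hp0.ne' h)]
    rw [div_le_iff₀ hpq]
    nlinarith [sq_nonneg (s - t), sq_nonneg (s + t), hsp, htq, sq_nonneg (s*s - t*t)]
  -- constant ≥ 2
  have hlog2 : (0.6931471803 : ℝ) < Real.log 2 := Real.log_two_gt_d9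
  have he1 : (1:ℝ) ≤ Real.sqrt (Real.exp 1) := by
    have := Real.sqrt_le_sqrt (show (1:ℝ) ≤ Real.exp 1 by linarith [Real.add_one_le_exp (1:ℝ)])
    simpa using this
  have hC : (2:ℝ) ≤ 4 * Real.sqrt (Real.exp 1) / logTwoE := by
    rw [logTwoE, div_div_eq_mul_div, div_one]
    nlinarith
  calc tdisc p q ≤ 2 * (s - t) ^ 2 := htd
    _ ≤ 2 * (p - q + q * Real.log (q / p)) := by linarith
    _ ≤ (4 * Real.sqrt (Real.exp 1) / logTwoE) * (p - q + q * Real.log (q / p)) :=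
        mul_le_mul_of_nonneg_right hC hnn
end

section
/- Let X be a real-valued random variable on a probability space and b > 0. If |X| ≤ b almost surely and E[exp(−X/2)] ≤ 1, then Var(X) ≤ (b + 4)·E[X]. -/
open MeasureTheory ProbabilityTheory

/-- For `u ≥ 0`, `(2 + u) * exp (-u) ≥ 2 - u`. -/
lemma aux_exp_pade {u : ℝ} (hu : 0 ≤ u) : 2 - u ≤ (2 + u) * Real.exp (-u) := by
  set f : ℝ → ℝ := fun v => (2 + v) * Real.exp (-v) + v with hf
  have hderiv : ∀ v : ℝ, HasDerivAt f (1 - (1 + v) * Real.exp (-v)) v := by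
    intro v
    have h1 : HasDerivAt (fun v : ℝ => Real.exp (-v)) (-Real.exp (-v)) v := by
      simpa using (hasDerivAt_neg v).exp
    have h2 : HasDerivAt (fun v : ℝ => (2 + v) * Real.exp (-v))
        (1 * Real.exp (-v) + (2 + v) * (-Real.exp (-v))) v :=
      HasDerivAt.mul ((hasDerivAt_id v).const_add 2) h1
    have : HasDerivAt f _ v := h2.add (hasDerivAt_id v)
    convert this using 1
    ring
  have hmono : MonotoneOn f (Set.Ici (0:ℝ)) := by
    apply monotoneOn_of_deriv_nonneg (convex_Ici 0)
    · exact (Continuous.mul (by continuity) (by continuity)).add continuous_id |>.continuousOn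
    · intro v hv
      exact (hderiv v).differentiableAt.differentiableWithinAt
    · intro v hv
      rw [(hderiv v).deriv]
      have h3 : (1 + v) * Real.exp (-v) ≤ 1 := by
        simp only [Set.mem_Ioi, interior_Ici] at hv
        have h4 : 1 + v ≤ Real.exp v := Real.add_one_le_exp v |>.trans_eq' (by ring_nf)
        have h5 : Real.exp (-v) > 0 := Real.exp_pos _
        calc (1 + v) * Real.exp (-v) ≤ Real.exp v * Real.exp (-v) := by
              apply mul_le_mul_of_nonneg_right h4 h5.le
          _ = 1 := by rw [← Real.exp_add]; simp
      linarith
  have h0 : f 0 ≤ f u := hmono (by simp) (by simpa using hu) hu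
  simp only [hf] at h0
  have : Real.exp (-(0:ℝ)) = 1 := by simp
  rw [this] at h0
  linarith

/-- Pointwise inequality: for `|x| ≤ b`, `1 - x/2 + x²/(2(b+4)) ≤ exp(-x/2)`. -/
lemma aux_pointwise {b : ℝ} (hb : 0 < b) {x : ℝ} (hx : |x| ≤ b) :
    1 - x / 2 + x ^ 2 / (2 * (b + 4)) ≤ Real.exp (-x / 2) := by
  have hxb : x ≤ b := (abs_le.mp hx).2
  have hxb' : -b ≤ x := (abs_le.mp hx).1
  rcases le_or_gt 0 x with hx0 | hx0
  · -- x ≥ 0 : use the Padé bound with u = x/2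
    have hu : (0:ℝ) ≤ x / 2 := by linarith
    have key := aux_exp_pade hu
    have hpos : (0:ℝ) < 2 + x / 2 := by linarith
    -- exp(-x/2) ≥ (2 - x/2)/(2 + x/2), hence exp(-x/2) - 1 + x/2 ≥ (x/2)²/(2+x/2) = x²/(2(x+4))
    have h1 : x ^ 2 / (2 * (x + 4)) ≤ Real.exp (-x / 2) - 1 + x / 2 := by
      rw [div_le_iff₀ (by linarith)]
      have : Real.exp (-(x/2)) = Real.exp (-x/2) := by ring_nf
      rw [this] at key
      nlinarith [key]
    have h2 : x ^ 2 / (2 * (b + 4)) ≤ x ^ 2 / (2 * (x + 4)) := by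
      apply div_le_div_of_nonneg_left (by positivity) (by linarith) (by linarith)
    linarith
  · -- x < 0 : use exp t ≥ 1 + t + t²/2 with t = -x/2
    have ht : (0:ℝ) ≤ -x / 2 := by linarith
    have key := Real.quadratic_le_exp_of_nonneg ht
    have h2 : x ^ 2 / (2 * (b + 4)) ≤ (-x / 2) ^ 2 / 2 := by
      rw [div_le_div_iff₀ (by linarith) (by norm_num)]
      nlinarith
    linarith

theorem stmt6 {Ω : Type*} [MeasureSpace Ω] [IsProbabilityMeasure (ℙ : Measure Ω)]
    (X : Ω → ℝ) (hX : Measurable X) (b : ℝ) (hb : 0 < b)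
    (hbdd : ∀ᵐ ω, |X ω| ≤ b)
    (hmix : (∫ ω, Real.exp (-X ω / 2)) ≤ 1) :
    variance X ℙ ≤ (b + 4) * ∫ ω, X ω := by
  have hXae : AEStronglyMeasurable X ℙ := hX.aestronglyMeasurable
  have hbdd' : ∀ᵐ ω, ‖X ω‖ ≤ b := by filter_upwards [hbdd] with ω h using h
  have hmem2 : MemLp X 2 ℙ := MemLp.of_bound hXae b hbdd'
  have hXint : Integrable X ℙ := (memLp_one_iff_integrable.mp (MemLp.of_bound hXae b hbdd'))
  have hX2int : Integrable (fun ω => X ω ^ 2) ℙ := hmem2.integrable_sq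
  have hexpmeas : AEStronglyMeasurable (fun ω => Real.exp (-X ω / 2)) ℙ :=
    (Real.measurable_exp.comp ((hX.neg).div_const 2)).aestronglyMeasurable
  have hexpbdd : ∀ᵐ ω, ‖Real.exp (-X ω / 2)‖ ≤ Real.exp (b / 2) := by
    filter_upwards [hbdd] with ω h
    rw [Real.norm_eq_abs, abs_of_pos (Real.exp_pos _)]
    apply Real.exp_le_exp.mpr
    have := (abs_le.mp h).1
    linarith
  have hexpint : Integrable (fun ω => Real.exp (-X ω / 2)) ℙ :=
    memLp_one_iff_integrable.mp (MemLp.of_bound hexpmeas _ hexpbdd)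
  have hlhsint : Integrable (fun ω => 1 - X ω / 2 + X ω ^ 2 / (2 * (b + 4))) ℙ := by
    apply Integrable.add
    · exact (integrable_const 1).sub (hXint.div_const 2)
    · exact hX2int.div_const _
  have hptws : ∀ᵐ ω, 1 - X ω / 2 + X ω ^ 2 / (2 * (b + 4)) ≤ Real.exp (-X ω / 2) := by
    filter_upwards [hbdd] with ω h using aux_pointwise hb h
  have hintle : (∫ ω, (1 - X ω / 2 + X ω ^ 2 / (2 * (b + 4)))) ≤ ∫ ω, Real.exp (-X ω / 2) :=
    integral_mono_ae hlhsint hexpint hptws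
  have hsplit : (∫ ω, (1 - X ω / 2 + X ω ^ 2 / (2 * (b + 4))))
      = 1 - (∫ ω, X ω) / 2 + (∫ ω, X ω ^ 2) / (2 * (b + 4)) := by
    have i1 : Integrable (fun ω => 1 - X ω / 2) ℙ := (integrable_const 1).sub (hXint.div_const 2)
    have i2 : Integrable (fun ω => X ω ^ 2 / (2 * (b + 4))) ℙ := hX2int.div_const _
    have i3 : Integrable (fun ω => X ω / 2) ℙ := hXint.div_const 2
    rw [integral_add i1 i2, integral_sub (integrable_const 1) i3,
      integral_const, integral_div, integral_div]
    simp
  have hEX2 : (∫ ω, X ω ^ 2) ≤ (b + 4) * ∫ ω, X ω := by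
    rw [hsplit] at hintle
    have h1 : (∫ ω, X ω ^ 2) / (2 * (b + 4)) ≤ (∫ ω, X ω) / 2 := by linarith
    have hb4 : (0:ℝ) < 2 * (b + 4) := by linarith
    rw [div_le_div_iff₀ hb4 (by norm_num)] at h1
    linarith
  have hvar : variance X ℙ = (∫ ω, X ω ^ 2) - (∫ ω, X ω) ^ 2 := by
    rw [variance_eq_sub hmem2]
    rfl
  rw [hvar]
  nlinarith [sq_nonneg (∫ ω, X ω)]
end

section
/- Let Y be a random variable on a probability space taking values in [0,1] with mean q = E[Y] ∈ (0,1), let p ∈ (0,1), and set φ = ℓ_X(Y, p) − ℓ_X(Y, q). If b > 0 and |φ| ≤ b almost surely, then Var(φ) ≤ (b + 4)·E[φ]. -/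
open MeasureTheory ProbabilityTheory

/-- The log-loss `ℓ_X(y,p) = −y·log p − (1−y)·log(1−p)` (natural logarithms). -/
noncomputable def logLoss (y p : ℝ) : ℝ := -y * Real.log p - (1 - y) * Real.log (1 - p)

lemma key_pointwise (b z : ℝ) (hb : 0 < b) (hz : |z| ≤ b) :
    1 - z + z^2/(b+4) ≤ Real.exp (-z) := by
  have hb4 : (0:ℝ) < b + 4 := by linarith
  rcases le_or_gt z 2 with h | h
  · have h1 : (0:ℝ) ≤ 1 - z/2 := by linarith
    have h2 : 1 - z/2 ≤ Real.exp (-(z/2)) := by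
      have := Real.add_one_le_exp (-(z/2)); linarith
    have h3 : (1 - z/2)^2 ≤ Real.exp (-z) := by
      have h4 := mul_le_mul h2 h2 h1 (Real.exp_nonneg _)
      rw [← Real.exp_add] at h4
      have : -(z/2) + -(z/2) = -z := by ring
      rw [this] at h4
      nlinarith [h4]
    have h5 : z^2/(b+4) ≤ z^2/4 := by
      apply div_le_div_of_nonneg_left (sq_nonneg z) (by norm_num) (by linarith)
    nlinarith [h3, h5]
  · have hzb : z ≤ b := (abs_le.mp hz).2
    have h6 : z^2/(b+4) ≤ z - 1 := by
      rw [div_le_iff₀ hb4]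
      nlinarith [mul_nonneg (by linarith : (0:ℝ) ≤ z - 2) (by linarith : (0:ℝ) ≤ b - z)]
    have := Real.exp_nonneg (-z)
    linarith

theorem stmt7 {Ω : Type*} [MeasureSpace Ω] [IsProbabilityMeasure (ℙ : Measure Ω)]
    (Y : Ω → ℝ) (hY : Measurable Y) (hrange : ∀ᵐ ω, Y ω ∈ Set.Icc (0:ℝ) 1)
    (q p b : ℝ) (hqdef : q = ∫ ω, Y ω) (hq : q ∈ Set.Ioo (0:ℝ) 1)
    (hp : p ∈ Set.Ioo (0:ℝ) 1) (hb : 0 < b)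
    (hbdd : ∀ᵐ ω, |logLoss (Y ω) p - logLoss (Y ω) q| ≤ b) :
    variance (fun ω => logLoss (Y ω) p - logLoss (Y ω) q) ℙ ≤
      (b + 4) * ∫ ω, (logLoss (Y ω) p - logLoss (Y ω) q) := by
  obtain ⟨hq0, hq1⟩ := hq
  obtain ⟨hp0, hp1⟩ := hp
  have hq1' : (0:ℝ) < 1 - q := by linarith
  have hp1' : (0:ℝ) < 1 - p := by linarith
  have hb4 : (0:ℝ) < b + 4 := by linarith
  set A : ℝ := (Real.log q - Real.log p) - (Real.log (1-q) - Real.log (1-p)) with hA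
  set C : ℝ := Real.log (1-q) - Real.log (1-p) with hC
  have hphi_eq : ∀ y : ℝ, logLoss y p - logLoss y q = y * A + C := by
    intro y; simp only [logLoss, hA, hC]; ring
  set φ : Ω → ℝ := fun ω => Y ω * A + C with hφ
  have hfun_eq : (fun ω => logLoss (Y ω) p - logLoss (Y ω) q) = φ := by
    funext ω; exact hphi_eq (Y ω)
  rw [hfun_eq]
  have hbdd' : ∀ᵐ ω, |φ ω| ≤ b := by
    filter_upwards [hbdd] with ω h
    rwa [hphi_eq (Y ω)] at h
  have hφm : Measurable φ := (hY.mul_const A).add_const C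
  -- integrability facts
  have hYint : Integrable Y := by
    apply (memLp_top_of_bound hY.aestronglyMeasurable 1 _).integrable le_top
    filter_upwards [hrange] with ω h
    rw [Real.norm_eq_abs, abs_le]; exact ⟨by linarith [h.1], h.2⟩
  have hφmem : MemLp φ ⊤ ℙ := by
    apply memLp_top_of_bound hφm.aestronglyMeasurable b
    filter_upwards [hbdd'] with ω h; rwa [Real.norm_eq_abs]
  have hφ2 : MemLp φ 2 ℙ := hφmem.mono_exponent le_top
  have hφint : Integrable φ := hφmem.integrable le_top
  have hφsqint : Integrable (fun ω => (φ ω)^2) := by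
    apply (memLp_top_of_bound (hφm.pow_const 2).aestronglyMeasurable (b^2) _).integrable le_top
    filter_upwards [hbdd'] with ω h
    rw [Real.norm_eq_abs, abs_pow]
    exact pow_le_pow_left₀ (abs_nonneg _) h 2
  have hexpint : Integrable (fun ω => Real.exp (-(φ ω))) := by
    apply (memLp_top_of_bound (hφm.neg.exp).aestronglyMeasurable (Real.exp b) _).integrable le_top
    filter_upwards [hbdd'] with ω h
    rw [Real.norm_eq_abs, abs_of_pos (Real.exp_pos _)]
    exact Real.exp_le_exp.2 (by rw [Pi.neg_apply]; cases abs_le.mp h with | intro h1 h2 => linarith)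
  -- E[Y] = q
  have hEY : ∫ ω, Y ω = q := hqdef.symm
  -- E[φ]
  have hEφ : ∫ ω, φ ω = q * A + C := by
    rw [hφ]
    rw [integral_add (hYint.mul_const A) (integrable_const C)]
    rw [integral_mul_const, hEY, integral_const]
    simp
  -- step: E[exp(-φ)] ≤ 1
  have hconv : ∀ᵐ ω, Real.exp (-(φ ω)) ≤ (1 - Y ω) * ((1-p)/(1-q)) + Y ω * (p/q) := by
    filter_upwards [hrange] with ω h
    obtain ⟨h0, h1⟩ := h
    have e1 : Real.exp (-C) = (1-p)/(1-q) := by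
      rw [hC, neg_sub, Real.exp_sub, Real.exp_log hp1', Real.exp_log hq1']
    have e2 : Real.exp (-(A + C)) = p/q := by
      have : -(A + C) = Real.log p - Real.log q := by rw [hA, hC]; ring
      rw [this, Real.exp_sub, Real.exp_log hp0, Real.exp_log hq0]
    have hcvx := convexOn_exp.2 (Set.mem_univ (-C)) (Set.mem_univ (-(A+C)))
      (by linarith : (0:ℝ) ≤ 1 - Y ω) (by linarith : (0:ℝ) ≤ Y ω) (by ring)
    simp only [smul_eq_mul] at hcvx
    have harg : (1 - Y ω) * (-C) + Y ω * (-(A + C)) = -(φ ω) := by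
      rw [hφ]; ring
    rw [harg] at hcvx
    rw [e1, e2] at hcvx
    exact hcvx
  have hRHSint : Integrable (fun ω => (1 - Y ω) * ((1-p)/(1-q)) + Y ω * (p/q)) := by
    exact ((((integrable_const (1:ℝ)).sub hYint).mul_const _).add (hYint.mul_const _))
  have hEexp : ∫ ω, Real.exp (-(φ ω)) ≤ 1 := by
    calc ∫ ω, Real.exp (-(φ ω)) ≤ ∫ ω, ((1 - Y ω) * ((1-p)/(1-q)) + Y ω * (p/q)) :=
          integral_mono_ae hexpint hRHSint hconv
      _ = 1 := by
          have hre : (fun ω => (1 - Y ω) * ((1-p)/(1-q)) + Y ω * (p/q))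
              = fun ω => Y ω * (p/q - (1-p)/(1-q)) + (1-p)/(1-q) := by
            funext ω; ring
          rw [hre, integral_add (hYint.mul_const _) (integrable_const _),
            integral_mul_const, hEY, integral_const]
          simp only [probReal_univ, ENNReal.toReal_one, smul_eq_mul, one_mul]
          field_simp
          ring
  -- pointwise inequality integrated
  have hptwise : ∀ᵐ ω, 1 - φ ω + (φ ω)^2/(b+4) ≤ Real.exp (-(φ ω)) := by
    filter_upwards [hbdd'] with ω h
    exact key_pointwise b (φ ω) hb h
  have hLHSint : Integrable (fun ω => 1 - φ ω + (φ ω)^2/(b+4)) := by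
    exact (((integrable_const (1:ℝ)).sub hφint).add (hφsqint.div_const _))
  have hmain : ∫ ω, (φ ω)^2 ≤ (b+4) * ∫ ω, φ ω := by
    have h1 : ∫ ω, (1 - φ ω + (φ ω)^2/(b+4)) ≤ ∫ ω, Real.exp (-(φ ω)) :=
      integral_mono_ae hLHSint hexpint hptwise
    have hsub : Integrable (fun ω => 1 - φ ω) ℙ := (integrable_const (1:ℝ)).sub hφint
    rw [integral_add hsub (hφsqint.div_const _)] at h1
    rw [integral_sub (integrable_const 1) hφint, integral_const, integral_div] at h1
    simp only [probReal_univ, ENNReal.toReal_one, smul_eq_mul, one_mul] at h1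
    have h2 := le_trans h1 hEexp
    have h3 : (∫ (a : Ω), φ a ^ 2) / (b + 4) ≤ ∫ (a : Ω), φ a := by linarith
    rw [div_le_iff₀ hb4] at h3
    linarith [h3]
  -- variance
  have hvar : variance φ ℙ = (∫ ω, (φ ω)^2) - (∫ ω, φ ω)^2 := by
    rw [variance_eq_sub hφ2]
    congr 1
  calc variance φ ℙ ≤ ∫ ω, (φ ω)^2 := by rw [hvar]; nlinarith [sq_nonneg (∫ ω, φ ω)]
    _ ≤ (b+4) * ∫ ω, φ ω := hmain
end

section
/- Let Y be a random variable on a probability space taking values in [0,1] with mean q = E[Y] ∈ (0,1], let p ∈ (0,1], and set φ = ℓ_P(Y, p) − ℓ_P(Y, q). If b > 0 and |φ| ≤ b almost surely, then Var(φ) ≤ (b + 2)·E[φ]. -/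
open MeasureTheory ProbabilityTheory

/-- The Poisson loss `ℓ_P(y,p) = p − y·log p` (natural logarithms). -/
noncomputable def poissonLoss (y p : ℝ) : ℝ := p - y * Real.log p

lemma cubic_exp_neg {s : ℝ} (h0 : 0 ≤ s) (h1 : s ≤ 1) :
    1 - s + s^2/2 - s^3/6 + s^4/24 - s^5/100 ≤ Real.exp (-s) := by
  have habs : |(-s)| ≤ 1 := by rw [abs_neg, abs_of_nonneg h0]; exact h1
  have h := Real.exp_bound habs (n := 5) (by norm_num)
  have hsum : ∑ m ∈ Finset.range 5, (-s) ^ m / (m.factorial : ℝ)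
      = 1 - s + s^2/2 - s^3/6 + s^4/24 := by
    simp [Finset.sum_range_succ, Nat.factorial]
    ring
  rw [hsum, abs_neg, abs_of_nonneg h0] at h
  have h2 := (abs_sub_le_iff.1 h).2
  norm_num [Nat.factorial] at h2
  nlinarith [pow_nonneg h0 5]

lemma keyK {s : ℝ} (hs : 0 ≤ s) : s^2 ≤ (s+2) * (Real.exp (-s) - 1 + s) := by
  have hsuff : 2 - s ≤ (s+2) * Real.exp (-s) := by
    rcases le_or_gt s 1 with h1 | h1
    · have hc := cubic_exp_neg hs h1
      nlinarith [pow_nonneg hs 3, pow_nonneg hs 4, pow_nonneg hs 5,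
        mul_le_mul_of_nonneg_left hc (by linarith : (0:ℝ) ≤ s + 2)]
    rcases le_or_gt s 2 with h2 | h2
    · have hE : Real.exp (-s) = Real.exp (-1) * Real.exp (1-s) := by
        rw [← Real.exp_add]; ring_nf
      have h3 : (2:ℝ) - s ≤ Real.exp (1 - s) := by
        have := Real.add_one_le_exp (1-s); linarith
      have h4 : Real.exp 1 ≤ 3 := by
        have := Real.exp_one_lt_d9; linarith
      have h5 : Real.exp (-1) * Real.exp 1 = 1 := by
        rw [← Real.exp_add]; norm_num
      have h6 : (0:ℝ) < Real.exp (-1) := Real.exp_pos _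
      have h7 : (1:ℝ)/3 ≤ Real.exp (-1) := by nlinarith
      have h8 : (0:ℝ) ≤ 2 - s := by linarith
      rw [hE]
      have e1 : (1/3)*(2-s) ≤ Real.exp (-1) * Real.exp (1-s) :=
        mul_le_mul h7 h3 h8 h6.le
      nlinarith [e1]
    · nlinarith [Real.exp_pos (-s)]
  nlinarith

set_option maxHeartbeats 1000000 in
theorem stmt8 {Ω : Type*} [MeasureSpace Ω] [IsProbabilityMeasure (ℙ : Measure Ω)]
    (Y : Ω → ℝ) (hY : Measurable Y) (hrange : ∀ᵐ ω, Y ω ∈ Set.Icc (0:ℝ) 1)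
    (q p b : ℝ) (hqdef : q = ∫ ω, Y ω) (hq : q ∈ Set.Ioc (0:ℝ) 1)
    (hp : p ∈ Set.Ioc (0:ℝ) 1) (hb : 0 < b)
    (hbdd : ∀ᵐ ω, |poissonLoss (Y ω) p - poissonLoss (Y ω) q| ≤ b) :
    variance (fun ω => poissonLoss (Y ω) p - poissonLoss (Y ω) q) ℙ ≤
      (b + 2) * ∫ ω, (poissonLoss (Y ω) p - poissonLoss (Y ω) q) := by
  have hp0 : 0 < p := hp.1
  have hq0 : 0 < q := hq.1
  obtain ⟨L, hL⟩ : ∃ x : ℝ, x = Real.log p - Real.log q := ⟨_, rfl⟩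
  obtain ⟨c, hc⟩ : ∃ x : ℝ, x = p - q := ⟨_, rfl⟩
  have hfun : (fun ω => poissonLoss (Y ω) p - poissonLoss (Y ω) q)
      = (fun ω => c - L * Y ω) := by
    funext ω; simp only [poissonLoss, hc, hL]; ring
  rw [hfun]
  have hpval : p = q * Real.exp L := by
    rw [hL, Real.exp_sub, Real.exp_log hp0, Real.exp_log hq0]
    field_simp
  -- integrability
  have hYm : AEStronglyMeasurable Y ℙ := hY.aestronglyMeasurable
  have hY2 : MemLp Y 2 ℙ := memLp_of_bounded hrange hYm 2
  have hYint : Integrable Y ℙ := hY2.integrable one_le_two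
  have hY2int : Integrable (fun ω => Y ω ^ 2) ℙ := by
    simpa [Pi.pow_apply] using hY2.integrable_sq
  have hfm : AEStronglyMeasurable (fun ω => c - L * Y ω) ℙ :=
    (measurable_const.sub (hY.const_mul L)).aestronglyMeasurable
  have hbdd' : ∀ᵐ ω, (c - L * Y ω) ∈ Set.Icc (-b) b := by
    filter_upwards [hbdd] with ω h
    have he : poissonLoss (Y ω) p - poissonLoss (Y ω) q = c - L * Y ω := by
      simp only [poissonLoss, hc, hL]; ring
    rw [he, abs_le] at h
    exact ⟨h.1, h.2⟩
  have hf2 : MemLp (fun ω => c - L * Y ω) 2 ℙ := memLp_of_bounded hbdd' hfm 2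
  -- expectations
  have hEf : ∫ ω, (c - L * Y ω) = c - L * q := by
    rw [integral_sub (integrable_const _) (hYint.const_mul L), integral_const,
      integral_const_mul, probReal_univ, ← hqdef]
    simp
  have hEf2 : ∫ ω, (c - L * Y ω)^2
      = c^2 - 2*c*L*q + L^2 * ∫ ω, Y ω ^ 2 := by
    have e1 : Integrable (fun ω => c^2 - (2*c*L) * Y ω) ℙ :=
      (integrable_const _).sub (hYint.const_mul _)
    have e2 : Integrable (fun ω => L^2 * Y ω^2) ℙ := hY2int.const_mul _
    calc ∫ ω, (c - L*Y ω)^2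
        = ∫ ω, ((c^2 - (2*c*L) * Y ω) + L^2 * Y ω^2) := by
          congr 1; funext ω; ring
      _ = (∫ ω, (c^2 - (2*c*L) * Y ω)) + ∫ ω, L^2 * Y ω^2 := integral_add e1 e2
      _ = ((∫ _ω, (c^2:ℝ)) - ∫ ω, (2*c*L) * Y ω) + ∫ ω, L^2 * Y ω^2 := by
          rw [integral_sub (integrable_const _) (hYint.const_mul _)]
      _ = c^2 - 2*c*L*q + L^2 * ∫ ω, Y ω^2 := by
          rw [integral_const, integral_const_mul, integral_const_mul, ← hqdef,
            probReal_univ]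
          simp
  -- variance identity
  have hVar : variance (fun ω => c - L * Y ω) ℙ
      = L^2 * ((∫ ω, Y ω ^ 2) - q^2) := by
    rw [variance_eq_sub hf2]
    have hsq : (∫ ω, ((fun ω => c - L * Y ω) ^ 2) ω) = ∫ ω, (c - L * Y ω)^2 := by
      simp [Pi.pow_apply]
    rw [hsq, hEf2, hEf]; ring
  rw [hVar, hEf]
  have hW1 : (∫ ω, Y ω ^ 2) ≤ q := by
    rw [hqdef]
    refine integral_mono_ae hY2int hYint ?_
    filter_upwards [hrange] with ω hω
    nlinarith [hω.1, hω.2]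
  -- make the second moment opaque
  obtain ⟨I2, hI2⟩ : ∃ x : ℝ, x = ∫ ω, Y ω ^ 2 := ⟨_, rfl⟩
  rw [← hI2] at hW1 ⊢
  rcases le_or_gt 0 L with hL0 | hL0
  · -- exp L ≥ 1 + L + L²/2 case
    have hquad : 1 + L + L^2/2 ≤ Real.exp L := Real.quadratic_le_exp_of_nonneg hL0
    have hcq : c - L * q = q * (Real.exp L - 1 - L) := by
      rw [hc, hpval]; ring
    rw [hcq]
    have hE2 : L^2/2 ≤ Real.exp L - 1 - L := by linarith
    have p1 : L^2 * (I2 - q^2) ≤ L^2 * q :=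
      mul_le_mul_of_nonneg_left (by nlinarith [sq_nonneg q]) (sq_nonneg L)
    have p2 : 2*q*(L^2/2) ≤ 2*q*(Real.exp L - 1 - L) :=
      mul_le_mul_of_nonneg_left hE2 (by linarith)
    have p3 : 0 ≤ b*(q*(Real.exp L - 1 - L)) :=
      mul_nonneg hb.le (mul_nonneg hq0.le (le_trans (by positivity) hE2))
    linarith [p1, p2, p3]
  · -- p < q case
    obtain ⟨s, hs⟩ : ∃ x : ℝ, x = -L := ⟨_, rfl⟩
    have hs0 : 0 < s := by rw [hs]; linarith
    obtain ⟨A, hA⟩ : ∃ x : ℝ, x = Real.exp L - 1 + s := ⟨_, rfl⟩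
    have hKK : s^2 ≤ (s+2) * A := by
      have h := keyK hs0.le
      rw [show -s = L by rw [hs]; ring] at h
      rw [hA]; exact h
    have hA0 : 0 ≤ A := by
      have := Real.add_one_le_exp L
      rw [hA, hs]; linarith
    have hcq : c - L * q = q * A := by
      rw [hA, hc, hpval, hs]; ring
    rw [hcq]
    have hL2 : L^2 = s^2 := by rw [hs]; ring
    rw [hL2]
    -- a.e. bound gives s * I2 ≤ (b - c) * q
    have hW2 : s * I2 ≤ (b - c) * q := by
      rw [hI2, hqdef]
      have hmono : ∫ ω, s * Y ω ^ 2 ≤ ∫ ω, (b - c) * Y ω := by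
        refine integral_mono_ae (hY2int.const_mul s) (hYint.const_mul (b - c)) ?_
        filter_upwards [hrange, hbdd'] with ω h1 h2
        have e : s * Y ω = -(L * Y ω) := by rw [hs]; ring
        have hYle : s * Y ω ≤ b - c := by
          have := h2.2
          linarith [e]
        nlinarith [h1.1, hYle]
      rw [integral_const_mul, integral_const_mul] at hmono
      exact hmono
    have hbc : (b - c) * q = q * b - q^2 * (A - s) := by
      rw [hA, hc, hpval]; ring
    rcases le_or_gt s b with hsb | hsb
    · have p1 : s^2 * (I2 - q^2) ≤ s^2 * q :=
        mul_le_mul_of_nonneg_left (by linarith [sq_nonneg q]) (sq_nonneg s)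
      have p2 : s^2 * q ≤ ((s+2)*A) * q := mul_le_mul_of_nonneg_right hKK hq0.le
      have p3 : ((s+2)*A) * q ≤ ((b+2)*A) * q :=
        mul_le_mul_of_nonneg_right
          (mul_le_mul_of_nonneg_right (by linarith) hA0) hq0.le
      linarith [p1, p2, p3]
    · have key2 : s^2 * (I2 - q^2) ≤ s*q*b - s*q^2*A := by
        have h2 := mul_le_mul_of_nonneg_left hW2 hs0.le
        rw [hbc] at h2
        linarith [h2]
      have h3 : s*b ≤ (b+2)*A := by
        have hsp : (0:ℝ) < s + 2 := by linarith
        have h1 : s*b*(s+2) ≤ (b+2)*s^2 := by nlinarith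
        have h2 := mul_le_mul_of_nonneg_left hKK (by linarith : (0:ℝ) ≤ b+2)
        nlinarith [h1, h2, hsp]
      have key3 : s*q*b ≤ (b+2)*(q*A) := by
        nlinarith [mul_le_mul_of_nonneg_left h3 hq0.le]
      linarith [key2, key3, mul_nonneg (mul_nonneg hs0.le (sq_nonneg q)) hA0]
end

section
/- Let (Ω, F, (F_t)_{t∈ℕ}, P) be a filtered probability space and (X_t)_{t≥1} a real-valued process adapted to (F_t)_{t≥1} with each X_t square-integrable, and let b > 0 satisfy X_t − E[X_t | F_{t−1}] ≤ b almost surely for all t ≥ 1. Define S_t = ∑_{i=1}^t (X_i − E[X_i | F_{i−1}]) and V_t = ∑_{i=1}^t Var(X_i | F_{i−1}), with S₀ = V₀ = 0. Then for every λ ∈ [0, 3/b), the process M_t(λ) = exp( λ·S_t − (λ² / (2·(1 − (b/3)·λ)))·V_t ), t ≥ 0, is a supermartingale with respect to (F_t) with M₀(λ) = 1. -/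
open MeasureTheory Nat

lemma two_mul_three_pow_le_factorial (n : ℕ) : 2 * 3 ^ n ≤ (n + 2)! := by
  induction n with
  | zero => simp [Nat.factorial]
  | succ n ih =>
    have : (n + 3)! = (n + 3) * (n + 2)! := rfl
    calc 2 * 3 ^ (n + 1) = 3 * (2 * 3 ^ n) := by ring
    _ ≤ 3 * (n + 2)! := by omega
    _ ≤ (n + 3) * (n + 2)! := Nat.mul_le_mul_right _ (by omega)
    _ = (n + 3)! := rfl

lemma exp_quad_bound {c : ℝ} (hc0 : 0 ≤ c) (hc3 : c < 3) {y : ℝ} (hy : y ≤ c) :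
    Real.exp y ≤ 1 + y + y ^ 2 / (2 * (1 - c / 3)) := by
  have hd : (0:ℝ) < 1 - c / 3 := by linarith
  rcases le_or_gt y 0 with h | h
  · have h1 : 1 + (-y) + (-y) ^ 2 / 2 ≤ Real.exp (-y) := by
      have := Real.sum_le_exp_of_nonneg (by linarith : (0:ℝ) ≤ -y) 3
      simp [Finset.sum_range_succ, Nat.factorial] at this
      nlinarith [this]
    have h2 : Real.exp y ≤ 1 + y + y ^ 2 / 2 := by
      have hpos : 0 < Real.exp (-y) := Real.exp_pos _
      have hden : (0:ℝ) < 1 - y + y ^ 2 / 2 := by nlinarith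
      have hey : Real.exp y = (Real.exp (-y))⁻¹ := by
        rw [Real.exp_neg, inv_inv]
      rw [hey]
      have h3 : (Real.exp (-y))⁻¹ ≤ (1 - y + y ^ 2 / 2)⁻¹ := by
        apply inv_anti₀ hden
        nlinarith [h1]
      refine h3.trans ?_
      rw [inv_le_iff_one_le_mul₀ hden]
      nlinarith [sq_nonneg y, sq_nonneg (y^2)]
    refine h2.trans ?_
    have : y ^ 2 / 2 ≤ y ^ 2 / (2 * (1 - c / 3)) := by
      apply div_le_div_of_nonneg_left (sq_nonneg y) (by linarith)
      nlinarith
    linarith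
  · have hsum : Summable (fun n : ℕ => y ^ n / n !) := Real.summable_pow_div_factorial y
    have hexp : Real.exp y = ∑' n : ℕ, y ^ n / n ! := by
      rw [Real.exp_eq_exp_ℝ, NormedSpace.exp_eq_tsum_div]
    have hsplit : ∑ i ∈ Finset.range 2, y ^ i / i ! + ∑' n : ℕ, y ^ (n + 2) / (n + 2)! =
        ∑' n : ℕ, y ^ n / n ! := hsum.sum_add_tsum_nat_add 2
    have htail : Summable (fun n : ℕ => y ^ (n + 2) / (n + 2)!) :=
      hsum.comp_injective (add_left_injective 2)
    have hgeo : Summable (fun n : ℕ => y ^ 2 / 2 * (c / 3) ^ n) :=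
      (summable_geometric_of_lt_one (by positivity) (by linarith)).mul_left _
    have hterm : ∀ n : ℕ, y ^ (n + 2) / (n + 2)! ≤ y ^ 2 / 2 * (c / 3) ^ n := by
      intro n
      have hfac : (2 * 3 ^ n : ℝ) ≤ (n + 2)! := by
        exact_mod_cast two_mul_three_pow_le_factorial n
      have hnum : y ^ (n + 2) ≤ y ^ 2 * c ^ n := by
        have : y ^ n ≤ c ^ n := pow_le_pow_left₀ h.le hy n
        calc y ^ (n + 2) = y ^ 2 * y ^ n := by ring
        _ ≤ y ^ 2 * c ^ n := by nlinarith [sq_nonneg y, pow_nonneg h.le n]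
      calc y ^ (n + 2) / (n + 2)! ≤ (y ^ 2 * c ^ n) / (2 * 3 ^ n) :=
            div_le_div₀ (by positivity) hnum (by positivity) hfac
      _ = y ^ 2 / 2 * (c / 3) ^ n := by
            rw [div_pow]; field_simp
    have hbound : ∑' n : ℕ, y ^ (n + 2) / (n + 2)! ≤ y ^ 2 / (2 * (1 - c / 3)) := by
      calc ∑' n : ℕ, y ^ (n + 2) / (n + 2)! ≤ ∑' n : ℕ, y ^ 2 / 2 * (c / 3) ^ n :=
            Summable.tsum_le_tsum hterm htail hgeo
      _ = y ^ 2 / 2 * ∑' n : ℕ, (c / 3) ^ n := tsum_mul_left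
      _ = y ^ 2 / 2 * (1 - c / 3)⁻¹ := by
            rw [tsum_geometric_of_lt_one (by positivity) (by linarith)]
      _ = y ^ 2 / (2 * (1 - c / 3)) := by field_simp
    have hr2 : ∑ i ∈ Finset.range 2, y ^ i / i ! = 1 + y := by
      simp [Finset.sum_range_succ, Nat.factorial]
    rw [hexp, ← hsplit, hr2]
    linarith

lemma memℒp_two_condexp {α : Type*} {m m0 : MeasurableSpace α} (hm : m ≤ m0)
    (μ : Measure α) [IsFiniteMeasure μ] {f : α → ℝ} (hf : MemLp f 2 μ) :
    MemLp (μ[f|m]) 2 μ := by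
  haveI : SigmaFinite (μ.trim hm) := sigmaFiniteTrim_mono _ le_rfl
  set F : Lp ℝ 2 μ := hf.toLp f with hF
  have heq : (condExpL2 ℝ ℝ hm F : α → ℝ) =ᵐ[μ] μ[f|m] := by
    refine ae_eq_condExp_of_forall_setIntegral_eq hm (hf.integrable one_le_two)
      (fun s _ hμs => integrableOn_condExpL2_of_measure_ne_top hm hμs.ne F)
      (fun s hs hμs => ?_) (aestronglyMeasurable_condExpL2 hm F)
    rw [integral_condExpL2_eq hm F hs hμs.ne]
    exact setIntegral_congr_ae (hm s hs)
      (by filter_upwards [hf.coeFn_toLp] with x hx _ using hx)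
  exact (Lp.memLp ((condExpL2 ℝ ℝ hm F : Lp ℝ 2 μ))).ae_eq heq

/-- The exponential process `exp(λ·S_t − ψ(λ)·V_t)` of a martingale-difference sum with
increments bounded above by `b`, with `ψ(λ) = λ²/(2(1 − (b/3)λ))`, is a supermartingale
starting at `1`, for every `λ ∈ [0, 3/b)`. -/
theorem stmt9 {Ω : Type*} {m0 : MeasurableSpace Ω} (μ : Measure Ω) [IsProbabilityMeasure μ]
    (𝒢 : Filtration ℕ m0) (X : ℕ → Ω → ℝ)
    (hadapt : ∀ t, 1 ≤ t → StronglyMeasurable[𝒢 t] (X t))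
    (hL2 : ∀ t, 1 ≤ t → MemLp (X t) 2 μ)
    (b : ℝ) (hb : 0 < b)
    (hbdd : ∀ t, 1 ≤ t → ∀ᵐ ω ∂μ, X t ω - (μ[X t | 𝒢 (t - 1)]) ω ≤ b)
    (S V : ℕ → Ω → ℝ)
    (hS : ∀ t ω, S t ω = ∑ i ∈ Finset.Icc 1 t, (X i ω - (μ[X i | 𝒢 (i - 1)]) ω))
    (hV : ∀ t ω, V t ω =
      ∑ i ∈ Finset.Icc 1 t,
        (μ[fun ω' => (X i ω' - (μ[X i | 𝒢 (i - 1)]) ω')^2 | 𝒢 (i - 1)]) ω)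
    (lam : ℝ) (hlam0 : 0 ≤ lam) (hlam1 : lam < 3 / b) :
    Supermartingale
        (fun t ω => Real.exp (lam * S t ω - lam^2 / (2 * (1 - (b / 3) * lam)) * V t ω)) 𝒢 μ
      ∧ ∀ ω, Real.exp (lam * S 0 ω - lam^2 / (2 * (1 - (b / 3) * lam)) * V 0 ω) = 1 := by
  have hc3 : lam * b < 3 := (lt_div_iff₀ hb).mp hlam1
  have hden : (0:ℝ) < 1 - b / 3 * lam := by nlinarith
  set ψ := lam ^ 2 / (2 * (1 - b / 3 * lam)) with hψdef
  have hψ0 : 0 ≤ ψ := by positivity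
  -- the pointwise exponential inequality
  have hkey : ∀ x : ℝ, x ≤ b → Real.exp (lam * x) ≤ 1 + lam * x + ψ * x ^ 2 := by
    intro x hx
    have hc0 : 0 ≤ lam * b := mul_nonneg hlam0 hb.le
    have hy : lam * x ≤ lam * b := mul_le_mul_of_nonneg_left hx hlam0
    have h := exp_quad_bound hc0 hc3 hy
    have heq : (lam * x) ^ 2 / (2 * (1 - lam * b / 3)) = ψ * x ^ 2 := by
      rw [hψdef]; field_simp
    linarith [h, heq.le, heq.ge]
  set M : ℕ → Ω → ℝ := fun t ω => Real.exp (lam * S t ω - ψ * V t ω) with hM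
  -- per-index facts
  have hXint : ∀ i, 1 ≤ i → Integrable (X i) μ := fun i hi => (hL2 i hi).integrable one_le_two
  have hDmem : ∀ i, 1 ≤ i → MemLp (fun ω => X i ω - (μ[X i|𝒢 (i - 1)]) ω) 2 μ :=
    fun i hi => (hL2 i hi).sub (memℒp_two_condexp (𝒢.le (i - 1)) μ (hL2 i hi))
  have hW0 : ∀ i, (0 : Ω → ℝ) ≤ᵐ[μ]
      μ[fun ω' => (X i ω' - (μ[X i|𝒢 (i - 1)]) ω')^2|𝒢 (i - 1)] :=
    fun i => condExp_nonneg (ae_of_all _ fun ω => sq_nonneg _)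
  -- measurability
  have hSmeas : ∀ t, StronglyMeasurable[𝒢 t] (S t) := by
    intro t
    have h : StronglyMeasurable[𝒢 t]
        fun ω => ∑ i ∈ Finset.Icc 1 t, (X i ω - (μ[X i|𝒢 (i - 1)]) ω) := by
      apply Finset.stronglyMeasurable_fun_sum
      intro i hi
      obtain ⟨hi1, hit⟩ := Finset.mem_Icc.mp hi
      exact ((hadapt i hi1).mono (𝒢.mono hit)).sub
        (stronglyMeasurable_condExp.mono (𝒢.mono ((Nat.sub_le i 1).trans hit)))
    exact (funext (hS t) : S t = _) ▸ h
  have hVmeas : ∀ t, StronglyMeasurable[𝒢 t] (V t) := by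
    intro t
    have h : StronglyMeasurable[𝒢 t]
        fun ω => ∑ i ∈ Finset.Icc 1 t,
          (μ[fun ω' => (X i ω' - (μ[X i|𝒢 (i - 1)]) ω')^2|𝒢 (i - 1)]) ω := by
      apply Finset.stronglyMeasurable_fun_sum
      intro i hi
      obtain ⟨hi1, hit⟩ := Finset.mem_Icc.mp hi
      exact stronglyMeasurable_condExp.mono (𝒢.mono ((Nat.sub_le i 1).trans hit))
    exact (funext (hV t) : V t = _) ▸ h
  have hMmeas : ∀ t, StronglyMeasurable[𝒢 t] (M t) := fun t =>
    Real.continuous_exp.comp_stronglyMeasurable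
      (((hSmeas t).const_mul lam).sub ((hVmeas t).const_mul ψ))
  -- a.e. bounds
  have hSbdd : ∀ t : ℕ, ∀ᵐ ω ∂μ, S t ω ≤ t * b := by
    intro t
    have h : ∀ᵐ ω ∂μ, ∀ i ∈ Finset.Icc 1 t, X i ω - (μ[X i|𝒢 (i - 1)]) ω ≤ b :=
      (Filter.eventually_all_finset _).2 fun i hi => hbdd i (Finset.mem_Icc.mp hi).1
    filter_upwards [h] with ω hω
    rw [hS]
    calc ∑ i ∈ Finset.Icc 1 t, (X i ω - (μ[X i|𝒢 (i - 1)]) ω) ≤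
        ∑ _i ∈ Finset.Icc 1 t, b := Finset.sum_le_sum hω
    _ = t * b := by rw [Finset.sum_const, Nat.card_Icc]; simp [nsmul_eq_mul]
  have hV0 : ∀ t : ℕ, ∀ᵐ ω ∂μ, 0 ≤ V t ω := by
    intro t
    have h : ∀ᵐ ω ∂μ, ∀ i ∈ Finset.Icc 1 t,
        (0:ℝ) ≤ (μ[fun ω' => (X i ω' - (μ[X i|𝒢 (i - 1)]) ω')^2|𝒢 (i - 1)]) ω :=
      (Filter.eventually_all_finset _).2 fun i _ => hW0 i
    filter_upwards [h] with ω hω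
    rw [hV]
    exact Finset.sum_nonneg hω
  have hMbdd : ∀ t : ℕ, ∀ᵐ ω ∂μ, ‖M t ω‖ ≤ Real.exp (lam * (t * b)) := by
    intro t
    filter_upwards [hSbdd t, hV0 t] with ω h1 h2
    rw [Real.norm_eq_abs, Real.abs_exp]
    apply Real.exp_le_exp.2
    nlinarith [mul_nonneg hψ0 h2, mul_le_mul_of_nonneg_left h1 hlam0]
  have hMint : ∀ t, Integrable (M t) μ := fun t =>
    Integrable.mono' (integrable_const _) ((hMmeas t).mono (𝒢.le t)).aestronglyMeasurable
      (hMbdd t)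
  -- the one-step supermartingale inequality
  have hstep : ∀ t : ℕ, μ[M (t + 1)|𝒢 t] ≤ᵐ[μ] M t := by
    intro t
    have hi1 : 1 ≤ t + 1 := Nat.le_add_left 1 t
    have hDmem' : MemLp (fun ω => X (t+1) ω - (μ[X (t+1)|𝒢 t]) ω) 2 μ := hDmem (t+1) hi1
    have hDint : Integrable (fun ω => X (t+1) ω - (μ[X (t+1)|𝒢 t]) ω) μ :=
      hDmem'.integrable one_le_two
    have hDsqint : Integrable (fun ω => (X (t+1) ω - (μ[X (t+1)|𝒢 t]) ω) ^ 2) μ :=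
      hDmem'.integrable_sq
    have hDbdd : ∀ᵐ ω ∂μ, X (t+1) ω - (μ[X (t+1)|𝒢 t]) ω ≤ b := hbdd (t+1) hi1
    -- G := exp(lam * D) is integrable
    have hGmeas : AEStronglyMeasurable (fun ω => Real.exp (lam * (X (t+1) ω - (μ[X (t+1)|𝒢 t]) ω))) μ :=
      Real.continuous_exp.comp_aestronglyMeasurable (hDint.aestronglyMeasurable.const_mul lam)
    have hGint : Integrable (fun ω => Real.exp (lam * (X (t+1) ω - (μ[X (t+1)|𝒢 t]) ω))) μ := by
      refine Integrable.mono' (integrable_const (Real.exp (lam * b))) hGmeas ?_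
      filter_upwards [hDbdd] with ω h
      rw [Real.norm_eq_abs, Real.abs_exp]
      exact Real.exp_le_exp.2 (mul_le_mul_of_nonneg_left h hlam0)
    -- A := M t * exp(-(ψ * W))
    set W : Ω → ℝ := μ[fun ω' => (X (t+1) ω' - (μ[X (t+1)|𝒢 t]) ω')^2|𝒢 t] with hWdef
    set A : Ω → ℝ := fun ω => M t ω * Real.exp (-(ψ * W ω)) with hA
    have hAmeas : StronglyMeasurable[𝒢 t] A :=
      (hMmeas t).mul (Real.continuous_exp.comp_stronglyMeasurable
        ((stronglyMeasurable_condExp.const_mul ψ).neg))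
    have hprod : M (t+1) = fun ω => A ω * Real.exp (lam * (X (t+1) ω - (μ[X (t+1)|𝒢 t]) ω)) := by
      funext ω
      have hsum : lam * S (t+1) ω - ψ * V (t+1) ω =
          ((lam * S t ω - ψ * V t ω) + (-(ψ * W ω))) +
            lam * (X (t+1) ω - (μ[X (t+1)|𝒢 t]) ω) := by
        rw [hS (t+1), hV (t+1), hS t, hV t, Finset.sum_Icc_succ_top hi1,
          Finset.sum_Icc_succ_top hi1]
        simp only [Nat.add_sub_cancel, ← hWdef]
        ring
      simp only [hM, hA]
      rw [hsum, Real.exp_add, Real.exp_add]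
    have hAGint : Integrable (fun ω => A ω * Real.exp (lam * (X (t+1) ω - (μ[X (t+1)|𝒢 t]) ω))) μ :=
      hprod ▸ hMint (t+1)
    have hpull : μ[M (t+1)|𝒢 t] =ᵐ[μ]
        A * μ[fun ω => Real.exp (lam * (X (t+1) ω - (μ[X (t+1)|𝒢 t]) ω))|𝒢 t] := by
      rw [hprod]
      exact condExp_mul_of_stronglyMeasurable_left hAmeas hAGint hGint
    -- conditional expectation computations
    have hcondD : μ[fun ω => X (t+1) ω - (μ[X (t+1)|𝒢 t]) ω|𝒢 t] =ᵐ[μ] 0 := by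
      have h1 : μ[fun ω => X (t+1) ω - (μ[X (t+1)|𝒢 t]) ω|𝒢 t] =ᵐ[μ]
          μ[X (t+1)|𝒢 t] - μ[μ[X (t+1)|𝒢 t]|𝒢 t] :=
        condExp_sub (hXint (t+1) hi1) integrable_condExp _
      have h2 : μ[(μ[X (t+1)|𝒢 t] : Ω → ℝ)|𝒢 t] =ᵐ[μ] μ[X (t+1)|𝒢 t] :=
        condExp_condExp_of_le le_rfl (𝒢.le t)
      filter_upwards [h1, h2] with ω e1 e2
      simp only [Pi.sub_apply, Pi.zero_apply] at *
      rw [e1, e2, sub_self]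
    have hRHSint : Integrable ((fun _ : Ω => (1:ℝ)) +
        ((fun ω => lam * (X (t+1) ω - (μ[X (t+1)|𝒢 t]) ω)) +
          fun ω => ψ * (X (t+1) ω - (μ[X (t+1)|𝒢 t]) ω) ^ 2)) μ :=
      (integrable_const 1).add ((hDint.const_mul lam).add (hDsqint.const_mul ψ))
    have hmono : μ[fun ω => Real.exp (lam * (X (t+1) ω - (μ[X (t+1)|𝒢 t]) ω))|𝒢 t] ≤ᵐ[μ]
        μ[(fun _ : Ω => (1:ℝ)) +
          ((fun ω => lam * (X (t+1) ω - (μ[X (t+1)|𝒢 t]) ω)) +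
            fun ω => ψ * (X (t+1) ω - (μ[X (t+1)|𝒢 t]) ω) ^ 2)|𝒢 t] := by
      refine condExp_mono hGint hRHSint ?_
      filter_upwards [hDbdd] with ω h
      have := hkey _ h
      simp only [Pi.add_apply]
      linarith
    have hlin : μ[(fun _ : Ω => (1:ℝ)) +
          ((fun ω => lam * (X (t+1) ω - (μ[X (t+1)|𝒢 t]) ω)) +
            fun ω => ψ * (X (t+1) ω - (μ[X (t+1)|𝒢 t]) ω) ^ 2)|𝒢 t] =ᵐ[μ]
        fun ω => 1 + ψ * W ω := by
      have h1 := condExp_add (μ := μ) (m := 𝒢 t) (integrable_const (1:ℝ))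
        ((hDint.const_mul lam).add (hDsqint.const_mul ψ))
      have h2 := condExp_add (μ := μ) (m := 𝒢 t) (hDint.const_mul lam) (hDsqint.const_mul ψ)
      have h3 : μ[fun ω => lam * (X (t+1) ω - (μ[X (t+1)|𝒢 t]) ω)|𝒢 t] =ᵐ[μ]
          lam • μ[fun ω => X (t+1) ω - (μ[X (t+1)|𝒢 t]) ω|𝒢 t] :=
        condExp_smul lam _ _
      have h4 : μ[fun ω => ψ * (X (t+1) ω - (μ[X (t+1)|𝒢 t]) ω) ^ 2|𝒢 t] =ᵐ[μ]
          ψ • μ[fun ω => (X (t+1) ω - (μ[X (t+1)|𝒢 t]) ω) ^ 2|𝒢 t] :=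
        condExp_smul ψ _ _
      have h5 : μ[fun _ : Ω => (1:ℝ)|𝒢 t] = fun _ => (1:ℝ) := condExp_const (𝒢.le t) 1
      filter_upwards [h1, h2, h3, h4, hcondD] with ω e1 e2 e3 e4 e5
      simp only [Pi.add_apply, Pi.smul_apply, smul_eq_mul, Pi.zero_apply] at e1 e2 e3 e4 e5
      rw [e1, e2, e3, e4, e5, congrFun h5 ω, hWdef]
      ring
    -- assemble
    filter_upwards [hpull, hmono, hlin] with ω ep em el
    have hAω : A ω = M t ω * Real.exp (-(ψ * W ω)) := rfl
    have hA0 : 0 ≤ A ω := by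
      rw [hAω, hM]
      positivity
    calc (μ[M (t + 1)|𝒢 t]) ω
        = A ω * (μ[fun ω => Real.exp (lam * (X (t+1) ω - (μ[X (t+1)|𝒢 t]) ω))|𝒢 t]) ω := ep
      _ ≤ A ω * Real.exp (ψ * W ω) := by
          refine mul_le_mul_of_nonneg_left ?_ hA0
          have := Real.add_one_le_exp (ψ * W ω)
          rw [el] at em
          linarith
      _ = M t ω := by
          rw [hAω, mul_assoc, ← Real.exp_add, neg_add_cancel, Real.exp_zero, mul_one]
  constructor
  · exact supermartingale_nat hMmeas hMint hstep
  · intro ω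
    simp [hS 0 ω, hV 0 ω]
end

section
/- Let (Ω, F, (F_t)_{t∈ℕ}, P) be a filtered probability space, c > 0, and let (S_t)_{t≥0} and (V_t)_{t≥0} be adapted processes with S_t real-valued and V_t nonnegative. Suppose that for every λ ∈ [0, 1/c) there exists a supermartingale (L_t(λ))_{t≥0} with respect to (F_t) with E[L₀(λ)] ≤ 1 and exp( λ·S_t − (λ²/(2·(1 − c·λ)))·V_t ) ≤ L_t(λ) almost surely for all t ≥ 0. Then for any ρ > 0 and δ ∈ (0,1), with probability at least 1 − δ, for all t ≥ 1: S_t ≤ 4·√(V_t · log(H_t/δ)) + 11·(c + ρ)·log(H_t/δ), where H_t = log(1 + V_t/ρ²) + e. -/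
open MeasureTheory Finset
set_option maxHeartbeats 1600000


noncomputable def myA (δ : ℝ) (k : ℕ) : ℝ := Real.log (((k:ℝ)+1)*((k:ℝ)+2)/δ)
noncomputable def myW (ρ : ℝ) (k : ℕ) : ℝ := ρ^2 * (Real.exp ((k:ℝ)+1) - 1)
noncomputable def myLam (c ρ δ : ℝ) (k : ℕ) : ℝ :=
  1/(c + Real.sqrt (myW ρ k / (2 * myA δ k)))

lemma myA_pos {δ : ℝ} (hδ0 : 0 < δ) (hδ1 : δ < 1) (k : ℕ) : 0 < myA δ k := by
  have hk0 : (0:ℝ) ≤ (k:ℝ) := Nat.cast_nonneg k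
  apply Real.log_pos
  have h2 : (2:ℝ) ≤ ((k:ℝ)+1)*((k:ℝ)+2) := by nlinarith
  have : ((k:ℝ)+1)*((k:ℝ)+2)/1 ≤ ((k:ℝ)+1)*((k:ℝ)+2)/δ :=
    div_le_div_of_nonneg_left (by linarith) hδ0 hδ1.le
  rw [div_one] at this; linarith

lemma myW_pos {ρ : ℝ} (hρ : 0 < ρ) (k : ℕ) : 0 < myW ρ k := by
  have : (1:ℝ) < Real.exp ((k:ℝ)+1) := by
    rw [← Real.exp_zero]; apply Real.exp_lt_exp.2; positivity
  have hρ2 : (0:ℝ) < ρ^2 := by positivity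
  unfold myW; nlinarith

/-- Pure arithmetic core. -/
lemma arith_core (c ρ δ Sv Vv A w s x ℓ kR : ℝ)
    (hc : 0 < c) (hρ : 0 < ρ) (hδ0 : 0 < δ) (hδ1 : δ < 1) (hV : 0 ≤ Vv)
    (hA : 0 < A) (hw : 0 < w) (hs : 0 < s) (hs2 : s^2 = w/(2*A))
    (hAval : A = Real.log ((kR+1)*(kR+2)/δ))
    (hwval : w = ρ^2*(Real.exp (kR+1) - 1))
    (hxval : x = Real.log (1+Vv/ρ^2))
    (hlval : ℓ = Real.log ((x + Real.exp 1)/δ))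
    (hk1 : Real.exp kR ≤ 1 + Vv/ρ^2)
    (hcase : kR = 0 ∨ 1 ≤ kR)
    (hb3 : Sv ≤ c*A + 2*(A*s)) :
    Sv ≤ 4 * Real.sqrt (Vv * ℓ) + 11*(c+ρ)*ℓ := by
  have hkR0 : 0 ≤ kR := by rcases hcase with h | h <;> linarith
  have hxpos : (0:ℝ) < 1 + Vv/ρ^2 := by positivity
  have hxk : kR ≤ x := by
    rw [hxval, Real.le_log_iff_exp_le hxpos]; exact hk1
  have hx0 : 0 ≤ x := le_trans hkR0 hxk
  have he_lo : (2.7:ℝ) < Real.exp 1 := by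
    have := Real.exp_one_gt_d9; linarith
  have he_hi : Real.exp 1 < (2.72:ℝ) := by
    have := Real.exp_one_lt_d9; linarith
  have hl1 : 1 ≤ ℓ := by
    rw [hlval, Real.le_log_iff_exp_le (by positivity)]
    have h1 : (x + Real.exp 1)/1 ≤ (x + Real.exp 1)/δ :=
      div_le_div_of_nonneg_left (by positivity) hδ0 hδ1.le
    rw [div_one] at h1; linarith
  have hA2l : A ≤ 2*ℓ := by
    have harg : (kR+1)*(kR+2)/δ ≤ ((x + Real.exp 1)/δ)^2 := by
      rw [div_pow, div_le_div_iff₀ hδ0 (by positivity)]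
      have hke : (kR+1)*(kR+2) ≤ (kR+Real.exp 1)^2 := by nlinarith
      have hmono : (kR+Real.exp 1)^2 ≤ (x + Real.exp 1)^2 := by nlinarith
      have hdd : δ^2 ≤ δ := by nlinarith
      have hh1 := mul_le_mul_of_nonneg_right (hke.trans hmono)
        (by positivity : (0:ℝ) ≤ δ^2)
      nlinarith [hh1, hdd, sq_nonneg (x + Real.exp 1)]
    have h1 : A ≤ Real.log (((x + Real.exp 1)/δ)^2) := by
      rw [hAval]
      exact Real.log_le_log (by positivity) harg
    rw [Real.log_pow] at h1; push_cast at h1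
    rw [hlval]; linarith
  have h2As : (2*(A*s))^2 = 2*A*w := by
    have h1 : (2*(A*s))^2 = 4*A^2*s^2 := by ring
    rw [h1, hs2]; field_simp; ring
  have hAs0 : (0:ℝ) ≤ 2*(A*s) := by positivity
  have hsqnn : 0 ≤ Real.sqrt (Vv*ℓ) := Real.sqrt_nonneg _
  rcases hcase with hk0 | hkpos
  · -- kR = 0, additive regime
    have hw2 : w ≤ 2*ρ^2 := by
      have he0 : Real.exp (kR+1) = Real.exp 1 := by rw [hk0, zero_add]
      rw [hwval, he0]; nlinarith
    have hρl : (0:ℝ) < ρ*ℓ := by positivity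
    have hl0 : (0:ℝ) ≤ ℓ := by linarith
    have hsq : (2*(A*s))^2 ≤ (3*(ρ*ℓ))^2 := by
      rw [h2As]
      have hh1 : A*w ≤ (2*ℓ)*(2*ρ^2) := mul_le_mul hA2l hw2 hw.le (by positivity)
      have hh2 : ℓ ≤ ℓ^2 := by nlinarith
      nlinarith [hh1, hh2, sq_nonneg ρ, sq_nonneg ℓ, mul_nonneg (sq_nonneg ρ) hl0]
    have h3 : 2*(A*s) ≤ 3*(ρ*ℓ) := by nlinarith [hsq, hAs0, hρl]
    have hcA : c*A ≤ c*(2*ℓ) := mul_le_mul_of_nonneg_left hA2l hc.le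
    nlinarith [hsqnn, h3, hb3, hcA, mul_nonneg hc.le hl0, mul_nonneg hρ.le hl0]
  · -- kR ≥ 1
    have hE : Real.exp 1 ≤ Real.exp kR := Real.exp_le_exp.2 hkpos
    have hρ2 : (0:ℝ) < ρ^2 := by positivity
    have hVlow : ρ^2*(Real.exp kR - 1) ≤ Vv := by
      have h1 : Real.exp kR - 1 ≤ Vv/ρ^2 := by linarith
      rw [le_div_iff₀ hρ2] at h1; nlinarith
    have hw4 : w ≤ 4*Vv := by
      rw [hwval]
      have hsplit : Real.exp (kR+1) = Real.exp kR * Real.exp 1 := by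
        rw [← Real.exp_add]
      rw [hsplit]
      have h4e : (0:ℝ) < 4 - Real.exp 1 := by linarith
      have hprod : (4 - Real.exp 1)*Real.exp 1 ≤ (4 - Real.exp 1)*Real.exp kR := by
        nlinarith
      have h3 : (3:ℝ) ≤ (4 - Real.exp 1)*Real.exp kR := by nlinarith
      nlinarith
    have hy2 : Real.sqrt (Vv*ℓ)^2 = Vv*ℓ := Real.sq_sqrt (by positivity)
    have hl0 : (0:ℝ) ≤ ℓ := by linarith
    have hsq : (2*(A*s))^2 ≤ (4*Real.sqrt (Vv*ℓ))^2 := by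
      rw [h2As]
      have h16 : (4*Real.sqrt (Vv*ℓ))^2 = 16*(Vv*ℓ) := by rw [mul_pow, hy2]; norm_num
      rw [h16]
      have hh1 : A*w ≤ (2*ℓ)*(4*Vv) := mul_le_mul hA2l hw4 hw.le (by positivity)
      nlinarith [hh1]
    have h3 : 2*(A*s) ≤ 4*Real.sqrt (Vv*ℓ) := by nlinarith [hsq, hAs0, hsqnn]
    have hcA : c*A ≤ c*(2*ℓ) := mul_le_mul_of_nonneg_left hA2l hc.le
    nlinarith [h3, hb3, hcA, mul_nonneg hc.le hl0, mul_nonneg hρ.le hl0]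

lemma key_lemma (c ρ δ : ℝ) (hc : 0 < c) (hρ : 0 < ρ) (hδ0 : 0 < δ) (hδ1 : δ < 1)
    (k : ℕ) (Sv Vv : ℝ) (hV : 0 ≤ Vv)
    (hk1 : Real.exp (k:ℝ) ≤ 1 + Vv/ρ^2) (hk2 : 1 + Vv/ρ^2 ≤ Real.exp ((k:ℝ)+1))
    (hbound : myLam c ρ δ k * Sv - (myLam c ρ δ k)^2/(2*(1 - c * myLam c ρ δ k)) * Vv
      ≤ myA δ k) :
    Sv ≤ 4 * Real.sqrt (Vv * Real.log ((Real.log (1+Vv/ρ^2) + Real.exp 1)/δ))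
      + 11*(c+ρ) * Real.log ((Real.log (1+Vv/ρ^2) + Real.exp 1)/δ) := by
  have hA : 0 < myA δ k := myA_pos hδ0 hδ1 k
  have hw : 0 < myW ρ k := myW_pos hρ k
  obtain ⟨A, hAdef⟩ : ∃ A, myA δ k = A := ⟨_, rfl⟩
  obtain ⟨w, hwdef⟩ : ∃ w, myW ρ k = w := ⟨_, rfl⟩
  rw [hAdef] at hA hbound
  rw [hwdef] at hw
  have hlamdef : myLam c ρ δ k = 1/(c + Real.sqrt (w/(2*A))) := by
    unfold myLam; rw [hAdef, hwdef]
  obtain ⟨s, hsdef⟩ : ∃ s, Real.sqrt (w/(2*A)) = s := ⟨_, rfl⟩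
  rw [hsdef] at hlamdef
  have hs : 0 < s := hsdef ▸ Real.sqrt_pos.2 (by positivity)
  have hs2 : s^2 = w/(2*A) := by rw [← hsdef]; exact Real.sq_sqrt (by positivity)
  have hcs : 0 < c + s := by linarith
  rw [hlamdef] at hbound
  have h1c' : 1 - c * (1/(c+s)) = s/(c+s) := by field_simp; ring
  rw [h1c'] at hbound
  have hb2 : Sv ≤ c*A + A*s + Vv/(2*s) := by
    have e1 : (1/(c+s)) * Sv - (1/(c+s))^2/(2*(s/(c+s))) * Vv
        = (Sv - Vv/(2*s))/(c+s) := by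
      field_simp
    rw [e1, div_le_iff₀ hcs] at hbound
    have h0 : (0:ℝ) ≤ Vv/(2*s) := by positivity
    nlinarith
  have hVw : Vv ≤ w := by
    have h1 : Vv/ρ^2 ≤ Real.exp ((k:ℝ)+1) - 1 := by linarith
    rw [div_le_iff₀ (by positivity : (0:ℝ) < ρ^2)] at h1
    rw [← hwdef]; unfold myW; nlinarith
  have hws : 2*A*s^2 = w := by rw [hs2]; field_simp
  have hb3 : Sv ≤ c*A + 2*(A*s) := by
    have h1 : Vv/(2*s) ≤ A*s := by
      rw [div_le_iff₀ (by positivity : (0:ℝ) < 2*s)]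
      calc Vv ≤ w := hVw
        _ = A*s*(2*s) := by rw [← hws]; ring
    linarith
  exact arith_core c ρ δ Sv Vv A w s _ _ (k:ℝ) hc hρ hδ0 hδ1 hV hA hw hs hs2
    (by rw [← hAdef]; rfl) (by rw [← hwdef]; rfl) rfl rfl hk1
    (by rcases Nat.eq_zero_or_pos k with h | h
        · left; simp [h]
        · right; exact_mod_cast h)
    hb3


/-- Ville's inequality for nonnegative supermartingales. -/
lemma my_ville {Ω : Type*} {m0 : MeasurableSpace Ω} {μ : Measure Ω} [IsProbabilityMeasure μ]
    {𝒢 : Filtration ℕ m0} {L : ℕ → Ω → ℝ} (hL : Supermartingale L 𝒢 μ)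
    (hpos : ∀ t ω, 0 ≤ L t ω) (h0 : (∫ ω, L 0 ω ∂μ) ≤ 1) {ε : ℝ} (hε : 0 < ε) :
    μ {ω | ∃ t, ε ≤ L t ω} ≤ ENNReal.ofReal (1 / ε) := by
  have hmeas : ∀ k, Measurable (L k) :=
    fun k => ((hL.stronglyMeasurable k).measurable).le (𝒢.le k)
  set E : ℕ → Set Ω := fun n => {ω | ∃ k ≤ n, ε ≤ L k ω} with hE
  have hEmeas : ∀ n, MeasurableSet (E n) := by
    intro n
    have : E n = ⋃ k ∈ Finset.range (n+1), {ω | ε ≤ L k ω} := by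
      ext ω; simp [hE, Nat.lt_succ_iff]
    rw [this]
    exact MeasurableSet.biUnion (Finset.range (n+1)).countable_toSet
      (fun k _ => measurableSet_le measurable_const (hmeas k))
  have hmain : ∀ n, μ (E n) ≤ ENNReal.ofReal (1 / ε) := by
    intro n
    set τ : Ω → WithTop ℕ := fun ω => ((hittingBtwn L {y : ℝ | ε ≤ y} 0 n ω : ℕ) : WithTop ℕ) with hτdef
    have hτ : IsStoppingTime 𝒢 τ := Adapted.isStoppingTime_hittingBtwn hL.stronglyAdapted.adapted measurableSet_Ici
    have hτle : ∀ ω, τ ω ≤ n := fun ω => WithTop.coe_le_coe.2 (hittingBtwn_le ω)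
    have hint : Integrable (stoppedValue L τ) μ :=
      integrable_stoppedValue ℕ hτ hL.integrable hτle
    -- expected value bound via optional stopping on -L
    have hexp : (∫ ω, stoppedValue L τ ω ∂μ) ≤ ∫ ω, L 0 ω ∂μ := by
      have := hL.neg.expected_stoppedValue_mono
        (isStoppingTime_const 𝒢 0) hτ (fun ω => WithTop.coe_le_coe.2 (Nat.zero_le _)) (hτle)
      simp only [stoppedValue, Pi.neg_apply, integral_neg, WithTop.untopD_coe] at this
      simp only [stoppedValue]
      linarith [this]
    -- on E n the stopped value is at least ε
    have hgeq : ∀ ω ∈ E n, ε ≤ stoppedValue L τ ω := by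
      intro ω hω
      obtain ⟨k, hk, hk2⟩ := hω
      exact stoppedValue_hittingBtwn_mem ⟨k, ⟨Nat.zero_le _, hk⟩, hk2⟩
    have h1 : ε * (μ (E n)).toReal ≤ ∫ ω in E n, stoppedValue L τ ω ∂μ :=
      by have := setIntegral_ge_of_const_le (hEmeas n) (measure_ne_top _ _) hgeq hint.integrableOn
         rwa [smul_eq_mul, mul_comm, measureReal_def] at this
    have h2 : (∫ ω in E n, stoppedValue L τ ω ∂μ) ≤ ∫ ω, stoppedValue L τ ω ∂μ :=
      setIntegral_le_integral hint (Filter.Eventually.of_forall fun ω => hpos _ ω)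
    have h3 : ε * (μ (E n)).toReal ≤ 1 := le_trans h1 (le_trans h2 (le_trans hexp h0))
    rw [ENNReal.le_ofReal_iff_toReal_le (measure_ne_top _ _) (by positivity)]
    rw [le_div_iff₀ hε]
    linarith
  have hU : {ω | ∃ t, ε ≤ L t ω} = ⋃ n, E n := by
    ext ω; constructor
    · rintro ⟨t, ht⟩; exact Set.mem_iUnion.2 ⟨t, ⟨t, le_refl t, ht⟩⟩
    · rintro hω; obtain ⟨n, k, _, hk⟩ := Set.mem_iUnion.1 hω; exact ⟨k, hk⟩
  rw [hU]
  have hdir : Directed (· ⊆ ·) E := by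
    apply Monotone.directed_le
    intro a b hab ω ⟨k, hk, hk2⟩
    exact ⟨k, le_trans hk hab, hk2⟩
  rw [hdir.measure_iUnion]
  exact iSup_le hmain


/-- Time-uniform sub-gamma concentration (Theorem 3.1 of Whitehouse et al., specialised):
if `(S_t, V_t)` is a sub-gamma process with parameter `c`, then with probability at least
`1 − δ`, simultaneously for all `t ≥ 1`,
`S_t ≤ 4·√(V_t·log(H_t/δ)) + 11·(c+ρ)·log(H_t/δ)` where `H_t = log(1 + V_t/ρ²) + e`. -/
theorem stmt10 {Ω : Type*} {m0 : MeasurableSpace Ω} (μ : Measure Ω) [IsProbabilityMeasure μ]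
    (𝒢 : Filtration ℕ m0) (c : ℝ) (hc : 0 < c) (S V : ℕ → Ω → ℝ)
    (hSad : ∀ t, StronglyMeasurable[𝒢 t] (S t))
    (hVad : ∀ t, StronglyMeasurable[𝒢 t] (V t))
    (hVnonneg : ∀ t ω, 0 ≤ V t ω)
    (hsub : ∀ lam : ℝ, 0 ≤ lam → lam < 1 / c →
      ∃ L : ℕ → Ω → ℝ, Supermartingale L 𝒢 μ ∧ (∫ ω, L 0 ω ∂μ) ≤ 1 ∧
        ∀ t, ∀ᵐ ω ∂μ,
          Real.exp (lam * S t ω - lam^2 / (2 * (1 - c * lam)) * V t ω) ≤ L t ω)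
    (ρ δ : ℝ) (hρ : 0 < ρ) (hδ : δ ∈ Set.Ioo (0:ℝ) 1) :
    ENNReal.ofReal (1 - δ) ≤
      μ {ω | ∀ t, 1 ≤ t →
        S t ω ≤
          4 * Real.sqrt (V t ω *
              Real.log ((Real.log (1 + V t ω / ρ^2) + Real.exp 1) / δ)) +
            11 * (c + ρ) * Real.log ((Real.log (1 + V t ω / ρ^2) + Real.exp 1) / δ)} := by
  obtain ⟨hδ0, hδ1⟩ := hδ
  have hApos : ∀ k, 0 < myA δ k := myA_pos hδ0 hδ1
  have hWpos : ∀ k, 0 < myW ρ k := myW_pos hρ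
  have hspos : ∀ k, 0 < Real.sqrt (myW ρ k / (2 * myA δ k)) := fun k =>
    Real.sqrt_pos.2 (div_pos (hWpos k) (by linarith [hApos k]))
  have hlam_pos : ∀ k, 0 < myLam c ρ δ k := fun k => by
    unfold myLam
    apply one_div_pos.2; linarith [hspos k]
  have hlam_lt : ∀ k, myLam c ρ δ k < 1/c := fun k => by
    unfold myLam
    exact one_div_lt_one_div_of_lt hc (by linarith [hspos k])
  -- the bad events
  set bad : ℕ → Set Ω := fun k => ⋃ t, {ω | Real.exp (myA δ k) ≤
    Real.exp (myLam c ρ δ k * S t ω -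
      (myLam c ρ δ k)^2/(2*(1 - c * myLam c ρ δ k)) * V t ω)} with hbaddef
  have hmeasbad : ∀ k, MeasurableSet (bad k) := by
    intro k
    apply MeasurableSet.iUnion
    intro t
    have hS : Measurable (S t) := ((hSad t).measurable).le (𝒢.le t)
    have hV : Measurable (V t) := ((hVad t).measurable).le (𝒢.le t)
    exact measurableSet_le measurable_const
      (Real.measurable_exp.comp ((measurable_const.mul hS).sub (measurable_const.mul hV)))
  have hbadle : ∀ k, μ (bad k) ≤ ENNReal.ofReal (δ/(((k:ℝ)+1)*((k:ℝ)+2))) := by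
    intro k
    obtain ⟨L, hLsm, hL0, hdom⟩ := hsub (myLam c ρ δ k) (hlam_pos k).le (hlam_lt k)
    set L' : ℕ → Ω → ℝ := fun t ω => max (L t ω) 0 with hL'def
    have hpt : ∀ t, L t =ᵐ[μ] L' t := fun t =>
      (hdom t).mono fun ω h => (max_eq_left ((Real.exp_pos _).le.trans h)).symm
    have hL'super : Supermartingale L' 𝒢 μ := by
      have hadp : StronglyAdapted 𝒢 L' := by
        intro t
        exact @StronglyMeasurable.sup Ω ℝ (L t) (fun _ => (0:ℝ)) (𝒢 t) _ _ _
          (hLsm.stronglyAdapted t) (@stronglyMeasurable_const Ω ℝ (𝒢 t) _ 0)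
      refine ⟨hadp, fun i j hij => ?_,
        fun t => (integrable_congr (hpt t)).1 (hLsm.integrable t)⟩
      calc μ[L' j|𝒢 i] =ᵐ[μ] μ[L j|𝒢 i] := condExp_congr_ae (hpt j).symm
        _ ≤ᵐ[μ] L i := hLsm.2.1 i j hij
        _ =ᵐ[μ] L' i := hpt i
    have hL'0 : (∫ ω, L' 0 ω ∂μ) ≤ 1 := by
      have h := integral_congr_ae (hpt 0)
      rw [← h]; exact hL0
    have hville := my_ville hL'super (fun t ω => le_max_right _ _) hL'0
      (Real.exp_pos (myA δ k))
    have hsubset : μ (bad k) ≤ μ {ω | ∃ t, Real.exp (myA δ k) ≤ L' t ω} := by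
      apply measure_mono_ae
      filter_upwards [ae_all_iff.2 hdom] with ω hω hbadω
      obtain ⟨t, ht⟩ := Set.mem_iUnion.1 hbadω
      exact ⟨t, le_trans ht (le_trans (hω t) (le_max_left _ _))⟩
    have hεval : Real.exp (myA δ k) = ((k:ℝ)+1)*((k:ℝ)+2)/δ := by
      apply Real.exp_log
      have : (0:ℝ) ≤ (k:ℝ) := Nat.cast_nonneg k
      positivity
    calc μ (bad k) ≤ μ {ω | ∃ t, Real.exp (myA δ k) ≤ L' t ω} := hsubset
      _ ≤ ENNReal.ofReal (1/Real.exp (myA δ k)) := hville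
      _ = ENNReal.ofReal (δ/(((k:ℝ)+1)*((k:ℝ)+2))) := by rw [hεval, one_div_div]
  set U : Set Ω := ⋃ k, bad k with hUdef
  have hUmeas : MeasurableSet U := MeasurableSet.iUnion hmeasbad
  have hU : μ U ≤ ENNReal.ofReal δ := by
    calc μ U ≤ ∑' k, μ (bad k) := measure_iUnion_le _
      _ ≤ ∑' (k : ℕ), ENNReal.ofReal (δ/(((k:ℝ)+1)*((k:ℝ)+2))) := ENNReal.tsum_le_tsum hbadle
      _ ≤ ENNReal.ofReal δ := by
          rw [ENNReal.tsum_eq_iSup_nat]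
          apply iSup_le; intro n
          rw [← ENNReal.ofReal_sum_of_nonneg (fun i _ => by positivity)]
          apply ENNReal.ofReal_le_ofReal
          have hterm : ∀ k ∈ Finset.range n, δ/(((k:ℝ)+1)*((k:ℝ)+2))
              = (fun i : ℕ => δ/((i:ℝ)+1)) k - (fun i : ℕ => δ/((i:ℝ)+1)) (k+1) := by
            intro k _
            push_cast
            rw [div_sub_div _ _ (by positivity) (by positivity)]
            rw [div_eq_div_iff (by positivity) (by positivity)]
            ring
          rw [Finset.sum_congr rfl hterm, Finset.sum_range_sub']
          simp only [Nat.cast_zero, zero_add, div_one]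
          have : 0 ≤ δ/((n:ℝ)+1) := by positivity
          linarith
  -- the good event is contained in the target set
  have hgood : Uᶜ ⊆ {ω | ∀ t, 1 ≤ t →
      S t ω ≤ 4 * Real.sqrt (V t ω *
          Real.log ((Real.log (1 + V t ω / ρ^2) + Real.exp 1) / δ)) +
        11 * (c + ρ) * Real.log ((Real.log (1 + V t ω / ρ^2) + Real.exp 1) / δ)} := by
    intro ω hω t _
    have hnotin : ∀ k, ω ∉ bad k := fun k hk => hω (Set.mem_iUnion.2 ⟨k, hk⟩)
    set k : ℕ := ⌊Real.log (1 + V t ω / ρ^2)⌋₊ with hkdef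
    have hbound : myLam c ρ δ k * S t ω -
        (myLam c ρ δ k)^2/(2*(1 - c * myLam c ρ δ k)) * V t ω ≤ myA δ k := by
      by_contra hcon
      push_neg at hcon
      exact hnotin k (Set.mem_iUnion.2 ⟨t, (Real.exp_lt_exp.2 hcon).le⟩)
    have hVpos : (0:ℝ) < 1 + V t ω / ρ^2 := by
      have := hVnonneg t ω; positivity
    have hx0 : 0 ≤ Real.log (1 + V t ω / ρ^2) := by
      apply Real.log_nonneg
      have := hVnonneg t ω
      have : 0 ≤ V t ω / ρ^2 := by positivity
      linarith
    have hk1 : Real.exp (k:ℝ) ≤ 1 + V t ω / ρ^2 := by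
      have h1 : (k:ℝ) ≤ Real.log (1 + V t ω / ρ^2) := Nat.floor_le hx0
      calc Real.exp (k:ℝ) ≤ Real.exp (Real.log (1 + V t ω / ρ^2)) := Real.exp_le_exp.2 h1
        _ = 1 + V t ω / ρ^2 := Real.exp_log hVpos
    have hk2 : 1 + V t ω / ρ^2 ≤ Real.exp ((k:ℝ)+1) := by
      have h1 : Real.log (1 + V t ω / ρ^2) < (k:ℝ)+1 := by
        have := Nat.lt_floor_add_one (Real.log (1 + V t ω / ρ^2))
        push_cast at this ⊢
        linarith
      calc 1 + V t ω / ρ^2 = Real.exp (Real.log (1 + V t ω / ρ^2)) := (Real.exp_log hVpos).symm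
        _ ≤ Real.exp ((k:ℝ)+1) := Real.exp_le_exp.2 h1.le
    exact key_lemma c ρ δ hc hρ hδ0 hδ1 k (S t ω) (V t ω) (hVnonneg t ω) hk1 hk2 hbound
  -- conclude
  calc ENNReal.ofReal (1 - δ) = 1 - ENNReal.ofReal δ := by
        rw [← ENNReal.ofReal_one, ← ENNReal.ofReal_sub _ hδ0.le]
    _ ≤ 1 - μ U := tsub_le_tsub_left hU 1
    _ = μ Uᶜ := (prob_compl_eq_one_sub hUmeas).symm
    _ ≤ _ := measure_mono hgood
end

section
/- Let d ∈ ℕ₊, S > 0, let U ⊆ ℝ be an interval, μ : U → [0,1], and let ℓ : [0,1] × [0,1] → ℝ be such that for each y ∈ [0,1] the map u ↦ ℓ(y, μ(u)) is differentiable on U with derivative μ(u) − y. Let A ⊆ ℝ^d with ‖a‖ ≤ 1 for all a ∈ A, let Θ ⊆ ℝ^d with ‖θ‖ ≤ S for all θ ∈ Θ and ⟨a, θ⟩ ∈ U for all a ∈ A, θ ∈ Θ, and fix θ⋆ ∈ Θ. Define Φ = { (y,a) ↦ ℓ(y, μ(⟨a, θ⟩)) − ℓ(y, μ(⟨a, θ⋆⟩))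 : θ ∈ Θ }, a set of functions [0,1] × A → ℝ. Then for every ε > 0 there exists a finite set C of functions [0,1] × A → ℝ with cardinality at most (1 + 8S/ε)^d such that every φ ∈ Φ satisfies sup_{(y,a)∈[0,1]×A} |φ(y,a) − ĉ(y,a)| ≤ ε for some ĉ ∈ C. -/
open Metric MeasureTheory

lemma exists_net (d : ℕ) (hd : 0 < d) (S ε : ℝ) (hS : 0 < S) (hε : 0 < ε)
    (Θ : Set (EuclideanSpace ℝ (Fin d))) (hΘ : ∀ θ ∈ Θ, ‖θ‖ ≤ S) :
    ∃ N ⊆ Θ, N.Finite ∧ (N.ncard : ℝ) ≤ (1 + 2 * S / ε) ^ d ∧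
      ∀ θ ∈ Θ, ∃ x ∈ N, dist θ x ≤ ε := by
  haveI : Nontrivial (EuclideanSpace ℝ (Fin d)) :=
    Module.nontrivial_of_finrank_pos (R := ℝ) (by rw [finrank_euclideanSpace_fin]; exact hd)
  -- Zorn's lemma: a maximal ε-separated subset of Θ
  have hzorn : ∀ c ⊆ {N : Set (EuclideanSpace ℝ (Fin d)) |
      N ⊆ Θ ∧ N.Pairwise fun x y => ε ≤ dist x y}, IsChain (· ⊆ ·) c →
      ∃ ub ∈ {N : Set (EuclideanSpace ℝ (Fin d)) |
        N ⊆ Θ ∧ N.Pairwise fun x y => ε ≤ dist x y}, ∀ s ∈ c, s ⊆ ub := by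
    intro c hc hchain
    refine ⟨⋃₀ c, ⟨?_, ?_⟩, fun s hs => Set.subset_sUnion_of_mem hs⟩
    · exact Set.sUnion_subset fun s hs => (hc hs).1
    · intro x hx y hy hxy
      obtain ⟨s, hs, hxs⟩ := hx
      obtain ⟨t, ht, hyt⟩ := hy
      rcases hchain.total hs ht with h | h
      · exact (hc ht).2 (h hxs) hyt hxy
      · exact (hc hs).2 hxs (h hyt) hxy
  obtain ⟨N, hNmax⟩ := zorn_subset _ hzorn
  obtain ⟨⟨hNΘ, hNsep⟩, hmax⟩ := hNmax
  -- cardinality bound for finite subsets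
  have key : ∀ F : Finset (EuclideanSpace ℝ (Fin d)), ↑F ⊆ N →
      (F.card : ℝ) ≤ (1 + 2 * S / ε) ^ d := by
    intro F hF
    have hdisj : (F : Set (EuclideanSpace ℝ (Fin d))).Pairwise
        (Function.onFun Disjoint fun x => ball x (ε / 2)) := by
      intro x hx y hy hxy
      apply ball_disjoint_ball
      have := hNsep (hF hx) (hF hy) hxy
      linarith
    have hsub : (⋃ x ∈ F, ball x (ε / 2)) ⊆ ball 0 (S + ε / 2) := by
      intro z hz
      simp only [Set.mem_iUnion] at hz
      obtain ⟨x, hx, hzx⟩ := hz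
      have hxS : ‖x‖ ≤ S := hΘ x (hNΘ (hF hx))
      have : dist z x < ε / 2 := hzx
      calc dist z (0 : EuclideanSpace ℝ (Fin d)) ≤ dist z x + dist x 0 := dist_triangle _ _ _
        _ < ε / 2 + S := by rw [dist_zero_right]; linarith
        _ = S + ε / 2 := by ring
    have hvol : ∑ x ∈ F, volume (ball x (ε / 2)) ≤ volume (ball (0 : EuclideanSpace ℝ (Fin d)) (S + ε / 2)) := by
      rw [← measure_biUnion_finset hdisj (fun x _ => measurableSet_ball)]
      exact measure_mono hsub
    have hb : ∀ x : EuclideanSpace ℝ (Fin d), ∀ r : ℝ, 0 ≤ r →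
        volume (ball x r) = ENNReal.ofReal (r ^ d) * volume (ball (0 : EuclideanSpace ℝ (Fin d)) 1) := by
      intro x r hr
      rw [Measure.addHaar_ball volume x hr, finrank_euclideanSpace_fin]
    rw [Finset.sum_congr rfl (fun x _ => hb x (ε/2) (by positivity)),
        Finset.sum_const, hb 0 (S + ε/2) (by positivity), nsmul_eq_mul, ← mul_assoc] at hvol
    have hv0 : volume (ball (0 : EuclideanSpace ℝ (Fin d)) 1) ≠ 0 :=
      (measure_ball_pos volume 0 one_pos).ne'
    have hvtop : volume (ball (0 : EuclideanSpace ℝ (Fin d)) 1) ≠ ⊤ :=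
      measure_ball_lt_top.ne
    have h2 : (F.card : ENNReal) * ENNReal.ofReal ((ε/2) ^ d) ≤ ENNReal.ofReal ((S + ε/2) ^ d) :=
      (ENNReal.mul_le_mul_iff_left hv0 hvtop).mp hvol
    have h3 : ENNReal.ofReal ((F.card : ℝ) * (ε/2) ^ d) ≤ ENNReal.ofReal ((S + ε/2) ^ d) := by
      rwa [ENNReal.ofReal_mul (by positivity), ENNReal.ofReal_natCast]
    have h4 : (F.card : ℝ) * (ε/2) ^ d ≤ (S + ε/2) ^ d :=
      (ENNReal.ofReal_le_ofReal_iff (by positivity)).mp h3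
    have h5 : (F.card : ℝ) ≤ (S + ε/2) ^ d / (ε/2) ^ d := by
      rw [le_div_iff₀ (by positivity)]; exact h4
    calc (F.card : ℝ) ≤ (S + ε/2) ^ d / (ε/2) ^ d := h5
      _ = ((S + ε/2) / (ε/2)) ^ d := by rw [← div_pow]
      _ = (1 + 2 * S / ε) ^ d := by congr 1; field_simp; ring
  -- N is finite
  have hNfin : N.Finite := by
    by_contra hinf
    obtain ⟨t, htN, htcard⟩ := Set.Infinite.exists_subset_card_eq hinf
      (⌈(1 + 2 * S / ε) ^ d⌉₊ + 1)
    have := key t htN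
    rw [htcard] at this
    have h1 : (1 + 2 * S / ε) ^ d ≤ (⌈(1 + 2 * S / ε) ^ d⌉₊ : ℝ) := Nat.le_ceil _
    push_cast at this
    linarith
  have hcard : (N.ncard : ℝ) ≤ (1 + 2 * S / ε) ^ d := by
    have := key hNfin.toFinset (by simp)
    rw [Set.ncard_eq_toFinset_card N hNfin]
    exact this
  refine ⟨N, hNΘ, hNfin, hcard, ?_⟩
  intro θ hθ
  by_contra hcon
  push_neg at hcon
  have hθN : θ ∉ N := by
    intro h
    have := hcon θ h
    simp only [dist_self] at this
    linarith
  have : insert θ N ∈ {N | N ⊆ Θ ∧ N.Pairwise fun x y => ε ≤ dist x y} := by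
    constructor
    · exact Set.insert_subset hθ hNΘ
    · intro x hx y hy hxy
      rcases hx with rfl | hx
      · rcases hy with rfl | hy
        · exact absurd rfl hxy
        · exact (hcon y hy).le
      · rcases hy with rfl | hy
        · rw [dist_comm]; exact (hcon x hx).le
        · exact hNsep hx hy hxy
  have := hmax this (Set.subset_insert _ _)
  exact hθN (this (Set.mem_insert _ _))


open RealInnerProductSpace

/-- Covering number bound for the excess loss class of a compatible generalised linear
model: for every `ε > 0` there is a uniform external `ε`-cover of the excess loss class of
cardinality at most `(1 + 8S/ε)^d`. -/
theorem stmt13 (d : ℕ) (hd : 0 < d) (S : ℝ) (hS : 0 < S)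
    (U : Set ℝ) (hU : Convex ℝ U)
    (μ : ℝ → ℝ) (hμmap : ∀ u ∈ U, μ u ∈ Set.Icc (0:ℝ) 1)
    (ℓ : ℝ → ℝ → ℝ)
    (hderiv : ∀ y ∈ Set.Icc (0:ℝ) 1, ∀ u ∈ U,
      HasDerivWithinAt (fun v => ℓ y (μ v)) (μ u - y) U u)
    (A : Set (EuclideanSpace ℝ (Fin d))) (hA : ∀ a ∈ A, ‖a‖ ≤ 1)
    (Θ : Set (EuclideanSpace ℝ (Fin d))) (hΘ : ∀ θ ∈ Θ, ‖θ‖ ≤ S)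
    (hAΘ : ∀ a ∈ A, ∀ θ ∈ Θ, ⟪a, θ⟫ ∈ U)
    (θstar : EuclideanSpace ℝ (Fin d)) (hθstar : θstar ∈ Θ)
    (ε : ℝ) (hε : 0 < ε) :
    ∃ C : Set (ℝ × EuclideanSpace ℝ (Fin d) → ℝ), C.Finite ∧
      (C.ncard : ℝ) ≤ (1 + 8 * S / ε) ^ d ∧
      ∀ θ ∈ Θ, ∃ c ∈ C, ∀ y ∈ Set.Icc (0:ℝ) 1, ∀ a ∈ A,
        |(ℓ y (μ ⟪a, θ⟫) - ℓ y (μ ⟪a, θstar⟫)) - c (y, a)| ≤ ε := by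
  -- Lipschitz estimate
  have hlip : ∀ θ ∈ Θ, ∀ θ' ∈ Θ, ∀ y ∈ Set.Icc (0:ℝ) 1, ∀ a ∈ A,
      |ℓ y (μ ⟪a, θ⟫) - ℓ y (μ ⟪a, θ'⟫)| ≤ dist θ θ' := by
    intro θ hθ θ' hθ' y hy a ha
    have hmv := hU.norm_image_sub_le_of_norm_hasDerivWithin_le
      (f := fun v => ℓ y (μ v)) (f' := fun u => μ u - y)
      (fun u hu => hderiv y hy u hu)
      (C := 1)
      (fun u hu => by
        have h1 := hμmap u hu
        have h2 := hy
        simp only [Set.mem_Icc] at h1 h2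
        rw [Real.norm_eq_abs, abs_le]
        constructor <;> linarith)
      (hAΘ a ha θ' hθ') (hAΘ a ha θ hθ)
    rw [one_mul, Real.norm_eq_abs, Real.norm_eq_abs] at hmv
    calc |ℓ y (μ ⟪a, θ⟫) - ℓ y (μ ⟪a, θ'⟫)| ≤ |⟪a, θ⟫ - ⟪a, θ'⟫| := hmv
      _ = |⟪a, θ - θ'⟫| := by rw [inner_sub_right]
      _ ≤ ‖a‖ * ‖θ - θ'‖ := abs_real_inner_le_norm a (θ - θ')
      _ ≤ 1 * ‖θ - θ'‖ := by
          apply mul_le_mul_of_nonneg_right (hA a ha) (norm_nonneg _)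
      _ = dist θ θ' := by rw [one_mul, dist_eq_norm]
  obtain ⟨N, hNΘ, hNfin, hNcard, hNnet⟩ := exists_net d hd S ε hS hε Θ hΘ
  refine ⟨(fun x : EuclideanSpace ℝ (Fin d) =>
      fun p : ℝ × EuclideanSpace ℝ (Fin d) =>
        ℓ p.1 (μ ⟪p.2, x⟫) - ℓ p.1 (μ ⟪p.2, θstar⟫)) '' N,
    hNfin.image _, ?_, ?_⟩
  · calc ((Set.image _ N).ncard : ℝ) ≤ (N.ncard : ℝ) := by
          exact_mod_cast Set.ncard_image_le hNfin
      _ ≤ (1 + 2 * S / ε) ^ d := hNcard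
      _ ≤ (1 + 8 * S / ε) ^ d := by
          apply pow_le_pow_left₀ (by positivity)
          gcongr
          linarith
  · intro θ hθ
    obtain ⟨x, hxN, hdx⟩ := hNnet θ hθ
    refine ⟨_, Set.mem_image_of_mem _ hxN, ?_⟩
    intro y hy a ha
    have : (ℓ y (μ ⟪a, θ⟫) - ℓ y (μ ⟪a, θstar⟫)) -
        (ℓ y (μ ⟪a, x⟫) - ℓ y (μ ⟪a, θstar⟫)) = ℓ y (μ ⟪a, θ⟫) - ℓ y (μ ⟪a, x⟫) := by ring
    rw [this]
    exact le_trans (hlip θ hθ x (hNΘ hxN) y hy a ha) hdx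
end

section
/- Let U ⊆ ℝ be an interval and μ : U → [0,1] be differentiable on U, and let ℓ : [0,1] × [0,1] → ℝ be such that for each y ∈ [0,1] the map u ↦ ℓ(y, μ(u)) is differentiable on U with derivative μ(u) − y. Let a ∈ ℝ^d with ‖a‖ ≤ 1, let θ, θ⋆ ∈ ℝ^d with ⟨a, θ⟩ ∈ U and ⟨a, θ⋆⟩ ∈ U, and let P be a probability measure on [0,1] with ∫ y dP(y) = μ(⟨a, θ⋆⟩). Writing θ(t) = t·θ + (1−t)·θ⋆, one has ∫ [ ℓ(y, μ(⟨a, θ⟩)) − ℓ(y, μ(⟨a, θ⋆⟩)) ] dP(y) = ⟨a, θ − θ⋆⟩² · ∫₀¹ (1−t)·μ'(⟨a, θ(t)⟩) dt, and moreover if μ' is continuous there exists ζ ∈ { ⟨a, θ(t)⟩ : t ∈ [0,1] } such that this quantity equals (1/2)·μ'(ζ)·⟨a, θ − θ⋆⟩². -/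
open RealInnerProductSpace MeasureTheory

open Set Filter

lemma ftc01 {f f' : ℝ → ℝ} (h : ∀ t ∈ Set.Icc (0:ℝ) 1, HasDerivWithinAt f (f' t) (Set.Icc 0 1) t)
    (hint : IntervalIntegrable f' volume 0 1) : ∫ t in (0:ℝ)..1, f' t = f 1 - f 0 :=
  intervalIntegral.integral_eq_sub_of_hasDeriv_right_of_le zero_le_one
    (fun t ht => (h t ht).continuousWithinAt)
    (fun t ht => ((h t ⟨ht.1.le, ht.2.le⟩).hasDerivAt (Icc_mem_nhds ht.1 ht.2)).hasDerivWithinAt)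
    hint

lemma deriv_nonneg_of_monoOn {f : ℝ → ℝ} {f' t : ℝ} (ht : t ∈ Set.Ioo (0:ℝ) 1)
    (hm : MonotoneOn f (Set.Icc 0 1)) (hd : HasDerivAt f f' t) : 0 ≤ f' := by
  have h1 : Tendsto (slope f t) (nhdsWithin t (Set.Ioo t 1 \ {t})) (nhds f') := by
    have := (hd.hasDerivWithinAt (s := Set.Ioo t 1))
    rw [hasDerivWithinAt_iff_tendsto_slope] at this
    exact this
  have hne : (nhdsWithin t (Set.Ioo t 1 \ {t})).NeBot := by
    rw [Set.diff_singleton_eq_self (by simp)]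
    apply mem_closure_iff_nhdsWithin_neBot.1
    rw [closure_Ioo (ne_of_lt ht.2)]
    exact ⟨le_refl t, ht.2.le⟩
  refine ge_of_tendsto h1 ?_
  filter_upwards [self_mem_nhdsWithin] with s hs
  have hs' : s ∈ Set.Ioo t 1 := hs.1
  have h2 : f t ≤ f s := hm ⟨ht.1.le, ht.2.le⟩ ⟨ht.1.le.trans hs'.1.le, hs'.2.le⟩ hs'.1.le
  rw [slope_def_field]
  exact div_nonneg (by linarith) (by linarith [hs'.1])

lemma key (U : Set ℝ) (hU : Convex ℝ U)
    (μ μ' : ℝ → ℝ) (hμmap : ∀ u ∈ U, μ u ∈ Set.Icc (0:ℝ) 1)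
    (hμd : ∀ u ∈ U, HasDerivWithinAt μ (μ' u) U u)
    (ℓ : ℝ → ℝ → ℝ)
    (hderiv : ∀ y ∈ Set.Icc (0:ℝ) 1, ∀ u ∈ U,
      HasDerivWithinAt (fun v => ℓ y (μ v)) (μ u - y) U u)
    (us u : ℝ) (hus : us ∈ U) (hu : u ∈ U)
    (P : Measure ℝ) [IsProbabilityMeasure P] (hP : ∀ᵐ y ∂P, y ∈ Set.Icc (0:ℝ) 1)
    (hmean : (∫ y, y ∂P) = μ us) :
    ((∫ y, (ℓ y (μ u) - ℓ y (μ us)) ∂P) =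
        (u - us)^2 * ∫ t in (0:ℝ)..1, (1-t) * μ' (t*u + (1-t)*us)) ∧
    (ContinuousOn μ' U → ∃ t₀ ∈ Set.Icc (0:ℝ) 1,
      (∫ y, (ℓ y (μ u) - ℓ y (μ us)) ∂P) = 1/2 * μ' (t₀*u + (1-t₀)*us) * (u - us)^2) := by
  rcases eq_or_ne u us with rfl | hne
  · constructor
    · simp
    · intro _
      exact ⟨0, ⟨le_refl 0, zero_le_one⟩, by simp⟩
  set δ := u - us with hδ
  have hδne : δ ≠ 0 := sub_ne_zero.2 hne
  set c : ℝ → ℝ := fun t => t*u + (1-t)*us with hc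
  have hcr : ∀ t : ℝ, t*u + (1-t)*us = c t := fun t => rfl
  simp only [hcr]
  have hc0 : c 0 = us := by simp [hc]
  have hc1 : c 1 = u := by simp [hc]
  have hcU : ∀ t ∈ Set.Icc (0:ℝ) 1, c t ∈ U := by
    intro t ht
    have := hU hu hus (a := t) (b := 1 - t) ht.1 (by linarith [ht.2]) (by ring)
    simpa [smul_eq_mul, hc] using this
  have hcd : ∀ t : ℝ, HasDerivAt c δ t := by
    intro t
    have : HasDerivAt (fun t : ℝ => t*u + (1-t)*us) (1*u + (0-1)*us) t :=
      ((hasDerivAt_id t).mul_const u).add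
        (((hasDerivAt_const t (1:ℝ)).sub (hasDerivAt_id t)).mul_const us)
    convert this using 1
    ring
  have hμc : ∀ t ∈ Set.Icc (0:ℝ) 1,
      HasDerivWithinAt (fun t => μ (c t)) (μ' (c t) * δ) (Set.Icc 0 1) t := by
    intro t ht
    exact (hμd (c t) (hcU t ht)).comp t ((hcd t).hasDerivWithinAt) (fun s hs => hcU s hs)
  have hμccont : ContinuousOn (fun t => μ (c t)) (Set.Icc 0 1) :=
    fun t ht => (hμc t ht).continuousWithinAt
  have hμcint : IntervalIntegrable (fun t => μ (c t)) volume 0 1 := by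
    apply ContinuousOn.intervalIntegrable
    rwa [Set.uIcc_of_le zero_le_one]
  set I := ∫ t in (0:ℝ)..1, μ (c t) with hI
  -- Step A
  have stepA : ∀ y ∈ Set.Icc (0:ℝ) 1, ℓ y (μ u) - ℓ y (μ us) = (I - y) * δ := by
    intro y hy
    have hft : ∀ t ∈ Set.Icc (0:ℝ) 1,
        HasDerivWithinAt (fun t => ℓ y (μ (c t))) ((μ (c t) - y) * δ) (Set.Icc 0 1) t := by
      intro t ht
      exact (hderiv y hy (c t) (hcU t ht)).comp t ((hcd t).hasDerivWithinAt) (fun s hs => hcU s hs)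
    have hint : IntervalIntegrable (fun t => (μ (c t) - y) * δ) volume 0 1 :=
      (hμcint.sub intervalIntegrable_const).mul_const δ
    have hftc := ftc01 hft hint
    rw [hc1, hc0] at hftc
    rw [← hftc]
    have hfe : (fun t => (μ (c t) - y) * δ) = fun t => μ (c t) * δ - y * δ := by funext t; ring
    rw [hfe, intervalIntegral.integral_sub (hμcint.mul_const δ) intervalIntegrable_const,
      intervalIntegral.integral_mul_const, intervalIntegral.integral_const]
    simp only [smul_eq_mul]
    ring
  -- Step B
  have hyint : Integrable (fun y => y) P := by
    apply (integrable_const (1:ℝ)).mono' measurable_id.aestronglyMeasurable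
    filter_upwards [hP] with y hy
    simp only [id_eq]
    rw [Real.norm_eq_abs, abs_le]
    exact ⟨by linarith [hy.1], hy.2⟩
  have stepB : (∫ y, (ℓ y (μ u) - ℓ y (μ us)) ∂P) = (I - μ us) * δ := by
    rw [integral_congr_ae (g := fun y => (I - y) * δ)
      (by filter_upwards [hP] with y hy; exact stepA y hy)]
    rw [integral_mul_const, integral_sub (integrable_const I) hyint, hmean, integral_const]
    simp
  -- injectivity of μ on the segment S
  have hminU : min us u ∈ U := by
    rcases le_total us u with h | h
    · rwa [min_eq_left h]
    · rwa [min_eq_right h]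
  have hmaxU : max us u ∈ U := by
    rcases le_total us u with h | h
    · rwa [max_eq_right h]
    · rwa [max_eq_left h]
  set S := Set.Icc (min us u) (max us u) with hS
  have hSU : S ⊆ U := hU.ordConnected.out hminU hmaxU
  have hμcontS : ContinuousOn μ S := fun v hv => ((hμd v (hSU hv)).continuousWithinAt).mono hSU
  have hinj : Set.InjOn μ S := by
    intro v₁ h1 v₂ h2 heq
    by_contra hne2
    wlog hlt : v₁ < v₂ generalizing v₁ v₂
    · exact this h2 h1 heq.symm (Ne.symm hne2)
        (lt_of_le_of_ne (not_lt.1 hlt) (Ne.symm hne2))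
    have hIccU : Set.Icc v₁ v₂ ⊆ U := fun x hx => hSU (Set.Icc_subset_Icc h1.1 h2.2 hx)
    have hw : (v₁+v₂)/2 ∈ Set.Ioo v₁ v₂ := ⟨by linarith, by linarith⟩
    have hconst : ∀ y ∈ Set.Icc (0:ℝ) 1,
        (∀ v ∈ Set.Icc v₁ v₂, ℓ y (μ v) = ℓ y (μ v₁)) → μ ((v₁+v₂)/2) = y := by
      intro y hy hcst
      have hd1 : HasDerivWithinAt (fun v => ℓ y (μ v)) (μ ((v₁+v₂)/2) - y)
          (Set.Icc v₁ v₂) ((v₁+v₂)/2) :=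
        (hderiv y hy _ (hIccU (Set.mem_Icc_of_Ioo hw))).mono hIccU
      have hd2 : HasDerivWithinAt (fun v => ℓ y (μ v)) 0 (Set.Icc v₁ v₂) ((v₁+v₂)/2) :=
        (hasDerivWithinAt_const _ _ (ℓ y (μ v₁))).congr hcst (hcst _ (Set.mem_Icc_of_Ioo hw))
      have hud : UniqueDiffWithinAt ℝ (Set.Icc v₁ v₂) ((v₁+v₂)/2) :=
        (uniqueDiffOn_Icc hlt) _ (Set.mem_Icc_of_Ioo hw)
      have hder1 := hd1.derivWithin hud
      rw [hd2.derivWithin hud] at hder1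
      linarith
    have hmono0 : MonotoneOn (fun v => ℓ 0 (μ v)) (Set.Icc v₁ v₂) := by
      apply monotoneOn_of_hasDerivWithinAt_nonneg (f' := fun v => μ v - 0) (convex_Icc v₁ v₂)
      · exact fun v hv => ((hderiv 0 (by norm_num) v (hIccU hv)).mono hIccU).continuousWithinAt
      · intro x hx
        rw [interior_Icc] at hx ⊢
        exact (hderiv 0 (by norm_num) x (hIccU (Set.mem_Icc_of_Ioo hx))).mono
          (fun z hz => hIccU (Set.mem_Icc_of_Ioo hz))
      · intro x hx
        rw [interior_Icc] at hx
        have := hμmap x (hIccU (Set.mem_Icc_of_Ioo hx))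
        linarith [this.1]
    have hanti1 : AntitoneOn (fun v => ℓ 1 (μ v)) (Set.Icc v₁ v₂) := by
      apply antitoneOn_of_hasDerivWithinAt_nonpos (f' := fun v => μ v - 1) (convex_Icc v₁ v₂)
      · exact fun v hv => ((hderiv 1 (by norm_num) v (hIccU hv)).mono hIccU).continuousWithinAt
      · intro x hx
        rw [interior_Icc] at hx ⊢
        exact (hderiv 1 (by norm_num) x (hIccU (Set.mem_Icc_of_Ioo hx))).mono
          (fun z hz => hIccU (Set.mem_Icc_of_Ioo hz))
      · intro x hx
        rw [interior_Icc] at hx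
        have := hμmap x (hIccU (Set.mem_Icc_of_Ioo hx))
        linarith [this.2]
    have hcst0 : ∀ v ∈ Set.Icc v₁ v₂, ℓ 0 (μ v) = ℓ 0 (μ v₁) := by
      intro v hv
      have l1 : ℓ 0 (μ v₁) ≤ ℓ 0 (μ v) := hmono0 (Set.left_mem_Icc.2 hlt.le) hv hv.1
      have l2 : ℓ 0 (μ v) ≤ ℓ 0 (μ v₂) := hmono0 hv (Set.right_mem_Icc.2 hlt.le) hv.2
      rw [← heq] at l2
      linarith
    have hcst1 : ∀ v ∈ Set.Icc v₁ v₂, ℓ 1 (μ v) = ℓ 1 (μ v₁) := by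
      intro v hv
      have l1 : ℓ 1 (μ v) ≤ ℓ 1 (μ v₁) := hanti1 (Set.left_mem_Icc.2 hlt.le) hv hv.1
      have l2 : ℓ 1 (μ v₂) ≤ ℓ 1 (μ v) := hanti1 hv (Set.right_mem_Icc.2 hlt.le) hv.2
      rw [← heq] at l2
      linarith
    have h0 := hconst 0 (by norm_num) hcst0
    have h1' := hconst 1 (by norm_num) hcst1
    rw [h0] at h1'
    norm_num at h1'
  have hSmono := ContinuousOn.strictMonoOn_of_injOn_Icc' min_le_max hμcontS hinj
  have hcS : ∀ t ∈ Set.Icc (0:ℝ) 1, c t ∈ S := by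
    intro t ht
    rw [← hcr t]
    rcases le_total us u with h | h
    · rw [hS, min_eq_left h, max_eq_right h, Set.mem_Icc]
      constructor
      · nlinarith [ht.1, ht.2]
      · nlinarith [ht.1, ht.2]
    · rw [hS, min_eq_right h, max_eq_left h, Set.mem_Icc]
      constructor
      · nlinarith [ht.1, ht.2]
      · nlinarith [ht.1, ht.2]
  have hsign : (∀ t ∈ Set.Ioo (0:ℝ) 1, 0 ≤ μ' (c t) * δ) ∨
      (∀ t ∈ Set.Ioo (0:ℝ) 1, μ' (c t) * δ ≤ 0) := by
    have hmonoOrAnti : MonotoneOn (fun t => μ (c t)) (Set.Icc 0 1) ∨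
        AntitoneOn (fun t => μ (c t)) (Set.Icc 0 1) := by
      rcases hSmono with hm | ha
      · rcases le_total us u with hd | hd
        · left; intro s hs t ht hst
          exact hm.monotoneOn (hcS s hs) (hcS t ht) (by rw [← hcr s, ← hcr t]; nlinarith)
        · right; intro s hs t ht hst
          exact hm.monotoneOn (hcS t ht) (hcS s hs) (by rw [← hcr s, ← hcr t]; nlinarith)
      · rcases le_total us u with hd | hd
        · right; intro s hs t ht hst
          exact ha.antitoneOn (hcS s hs) (hcS t ht) (by rw [← hcr s, ← hcr t]; nlinarith)
        · left; intro s hs t ht hst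
          exact ha.antitoneOn (hcS t ht) (hcS s hs) (by rw [← hcr s, ← hcr t]; nlinarith)
    rcases hmonoOrAnti with hm | ha
    · left; intro t ht
      exact deriv_nonneg_of_monoOn ht hm
        ((hμc t ⟨ht.1.le, ht.2.le⟩).hasDerivAt (Icc_mem_nhds ht.1 ht.2))
    · right; intro t ht
      have hneg : 0 ≤ -(μ' (c t) * δ) :=
        deriv_nonneg_of_monoOn ht ha.neg
          (((hμc t ⟨ht.1.le, ht.2.le⟩).hasDerivAt (Icc_mem_nhds ht.1 ht.2)).neg)
      linarith
  have hI2 : IntervalIntegrable (fun t => μ' (c t) * δ) volume 0 1 := by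
    rcases hsign with hp | hn
    · apply intervalIntegral.intervalIntegrable_deriv_of_nonneg (g := fun t => μ (c t))
      · rwa [Set.uIcc_of_le zero_le_one]
      · intro x hx
        have hx' : x ∈ Set.Ioo (0:ℝ) 1 := by simpa using hx
        exact (hμc x ⟨hx'.1.le, hx'.2.le⟩).hasDerivAt (Icc_mem_nhds hx'.1 hx'.2)
      · intro x hx
        have hx' : x ∈ Set.Ioo (0:ℝ) 1 := by simpa using hx
        exact hp x hx'
    · have hneg : IntervalIntegrable (fun t => -(μ' (c t) * δ)) volume 0 1 := by
        apply intervalIntegral.intervalIntegrable_deriv_of_nonneg (g := fun t => -(μ (c t)))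
        · rw [Set.uIcc_of_le zero_le_one]
          exact hμccont.neg
        · intro x hx
          have hx' : x ∈ Set.Ioo (0:ℝ) 1 := by simpa using hx
          exact ((hμc x ⟨hx'.1.le, hx'.2.le⟩).hasDerivAt (Icc_mem_nhds hx'.1 hx'.2)).neg
        · intro x hx
          have hx' : x ∈ Set.Ioo (0:ℝ) 1 := by simpa using hx
          linarith [hn x hx']
      have hres := hneg.neg
      have he : (fun t => μ' (c t) * δ) = -(fun t => -(μ' (c t) * δ)) := by
        funext t; simp
      rwa [he]
  have hI3 : IntervalIntegrable (fun t => (1 - t) * μ' (c t)) volume 0 1 := by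
    have hcont2 : ContinuousOn (fun t : ℝ => (1 - t) / δ) (Set.uIcc 0 1) :=
      (continuousOn_const.sub continuousOn_id).div_const δ
    have hmul := hI2.mul_continuousOn hcont2
    have he : (fun t => μ' (c t) * δ * ((1 - t) / δ)) = fun t => (1 - t) * μ' (c t) := by
      funext t; field_simp
    rwa [he] at hmul
  have hI4 : IntervalIntegrable (fun t => (t - 1) * (μ' (c t) * δ)) volume 0 1 := by
    have hcont4 : ContinuousOn (fun t : ℝ => t - 1) (Set.uIcc 0 1) := by fun_prop
    have hmul := hI2.mul_continuousOn hcont4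
    have he : (fun t => μ' (c t) * δ * (t - 1)) = fun t => (t - 1) * (μ' (c t) * δ) := by
      funext t; ring
    rwa [he] at hmul
  -- Step C : integration by parts
  have hK : ∀ t ∈ Set.Icc (0:ℝ) 1, HasDerivWithinAt (fun t => (t - 1) * (μ (c t) - μ us))
      ((μ (c t) - μ us) + (t - 1) * (μ' (c t) * δ)) (Set.Icc 0 1) t := by
    intro t ht
    have := (((hasDerivAt_id t).sub_const 1).hasDerivWithinAt).fun_mul ((hμc t ht).sub_const (μ us))
    simpa using this
  have hI5 : IntervalIntegrable (fun t => (μ (c t) - μ us) + (t - 1) * (μ' (c t) * δ)) volume 0 1 :=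
    (hμcint.sub intervalIntegrable_const).add hI4
  have hC := ftc01 hK hI5
  rw [hc0, hc1] at hC
  have hC0 : (∫ t in (0:ℝ)..1, ((μ (c t) - μ us) + (t - 1) * (μ' (c t) * δ))) = 0 := by
    rw [hC]; ring
  rw [intervalIntegral.integral_add (hμcint.sub intervalIntegrable_const) hI4] at hC0
  have hJ : I - μ us = (∫ t in (0:ℝ)..1, (1 - t) * μ' (c t)) * δ := by
    have e1 : (∫ t in (0:ℝ)..1, (μ (c t) - μ us)) = I - μ us := by
      rw [intervalIntegral.integral_sub hμcint intervalIntegrable_const,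
        intervalIntegral.integral_const]
      simp [hI]
    have e2 : (∫ t in (0:ℝ)..1, (t - 1) * (μ' (c t) * δ)) =
        -((∫ t in (0:ℝ)..1, (1 - t) * μ' (c t)) * δ) := by
      have he : (fun t => (t - 1) * (μ' (c t) * δ)) = fun t => -((1 - t) * μ' (c t) * δ) := by
        funext t; ring
      rw [he, intervalIntegral.integral_neg, intervalIntegral.integral_mul_const]
    rw [e1, e2] at hC0
    linarith
  constructor
  · rw [stepB, hJ]; ring
  · intro hcont'
    have hccont : ContinuousOn c (Set.Icc 0 1) := fun t ht => ((hcd t).continuousAt).continuousWithinAt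
    have hφ : ContinuousOn (fun t => μ' (c t)) (Set.Icc 0 1) :=
      hcont'.comp hccont (fun t ht => hcU t ht)
    obtain ⟨tmin, htmin, hmin⟩ := isCompact_Icc.exists_isMinOn (Set.nonempty_Icc.2 zero_le_one) hφ
    obtain ⟨tmax, htmax, hmax⟩ := isCompact_Icc.exists_isMaxOn (Set.nonempty_Icc.2 zero_le_one) hφ
    set J := ∫ t in (0:ℝ)..1, (1 - t) * μ' (c t) with hJdef
    have hhalf : ∀ m : ℝ, (∫ t in (0:ℝ)..1, (1 - t) * m) = m / 2 := by
      intro m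
      have he : (fun t : ℝ => (1 - t) * m) = fun t => m - m * t := by funext t; ring
      have hid : IntervalIntegrable (fun t : ℝ => m * t) volume 0 1 :=
        (continuous_const.mul continuous_id).intervalIntegrable 0 1
      rw [he, intervalIntegral.integral_sub intervalIntegrable_const hid,
        intervalIntegral.integral_const_mul, integral_id,
        intervalIntegral.integral_const]
      norm_num
      ring
    have hlb : μ' (c tmin) / 2 ≤ J := by
      rw [← hhalf (μ' (c tmin)), hJdef]
      have hcc : IntervalIntegrable (fun t : ℝ => (1 - t) * μ' (c tmin)) volume 0 1 :=
        ((continuous_const.sub continuous_id).mul continuous_const).intervalIntegrable 0 1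
      apply intervalIntegral.integral_mono_on zero_le_one hcc hI3
      intro t ht
      have h1t : 0 ≤ 1 - t := by linarith [ht.2]
      exact mul_le_mul_of_nonneg_left (isMinOn_iff.1 hmin t ht) h1t
    have hub : J ≤ μ' (c tmax) / 2 := by
      rw [← hhalf (μ' (c tmax)), hJdef]
      have hcc : IntervalIntegrable (fun t : ℝ => (1 - t) * μ' (c tmax)) volume 0 1 :=
        ((continuous_const.sub continuous_id).mul continuous_const).intervalIntegrable 0 1
      apply intervalIntegral.integral_mono_on zero_le_one hI3 hcc
      intro t ht
      have h1t : 0 ≤ 1 - t := by linarith [ht.2]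
      exact mul_le_mul_of_nonneg_left (isMaxOn_iff.1 hmax t ht) h1t
    have hsub : Set.uIcc tmin tmax ⊆ Set.Icc 0 1 := Set.ordConnected_Icc.uIcc_subset htmin htmax
    have hmem : 2 * J ∈ Set.uIcc (μ' (c tmin)) (μ' (c tmax)) := by
      rw [Set.mem_uIcc]; left; constructor <;> linarith
    obtain ⟨t₀, ht₀, ht₀eq⟩ := intermediate_value_uIcc (hφ.mono hsub) hmem
    refine ⟨t₀, hsub ht₀, ?_⟩
    have heq0 : μ' (c t₀) = 2 * J := ht₀eq
    rw [stepB, hJ, heq0]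
    ring


/-- The expected excess loss of a compatible GLM at action `a`, comparing `θ` to the true
parameter `θ⋆`, equals `⟨a, θ−θ⋆⟩² ∫₀¹ (1−t)μ'(⟨a, θ(t)⟩) dt`, and, if `μ'` is continuous,
also equals `(1/2)·μ'(ζ)·⟨a, θ−θ⋆⟩²` for some `ζ` on the segment of inner products. -/
theorem stmt14 {d : ℕ} (U : Set ℝ) (hU : Convex ℝ U)
    (μ μ' : ℝ → ℝ) (hμmap : ∀ u ∈ U, μ u ∈ Set.Icc (0:ℝ) 1)
    (hμd : ∀ u ∈ U, HasDerivWithinAt μ (μ' u) U u)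
    (ℓ : ℝ → ℝ → ℝ)
    (hderiv : ∀ y ∈ Set.Icc (0:ℝ) 1, ∀ u ∈ U,
      HasDerivWithinAt (fun v => ℓ y (μ v)) (μ u - y) U u)
    (a θ θstar : EuclideanSpace ℝ (Fin d)) (ha : ‖a‖ ≤ 1)
    (hθU : ⟪a, θ⟫ ∈ U) (hθsU : ⟪a, θstar⟫ ∈ U)
    (P : Measure ℝ) [IsProbabilityMeasure P] (hP : ∀ᵐ y ∂P, y ∈ Set.Icc (0:ℝ) 1)
    (hmean : (∫ y, y ∂P) = μ ⟪a, θstar⟫) :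
    ((∫ y, (ℓ y (μ ⟪a, θ⟫) - ℓ y (μ ⟪a, θstar⟫)) ∂P) =
        ⟪a, θ - θstar⟫ ^ 2 *
          ∫ t in (0:ℝ)..1,
            (1 - t) * μ' ⟪a, (t • θ + (1 - t) • θstar : EuclideanSpace ℝ (Fin d))⟫) ∧
      (ContinuousOn μ' U → ∃ t₀ ∈ Set.Icc (0:ℝ) 1,
        (∫ y, (ℓ y (μ ⟪a, θ⟫) - ℓ y (μ ⟪a, θstar⟫)) ∂P) =
          (1 / 2) * μ' ⟪a, (t₀ • θ + (1 - t₀) • θstar : EuclideanSpace ℝ (Fin d))⟫ *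
            ⟪a, θ - θstar⟫ ^ 2) := by
  have hinner : ∀ t : ℝ, ⟪a, (t • θ + (1 - t) • θstar : EuclideanSpace ℝ (Fin d))⟫ =
      t * ⟪a, θ⟫ + (1 - t) * ⟪a, θstar⟫ := by
    intro t
    rw [inner_add_right, real_inner_smul_right, real_inner_smul_right]
  have hsub : ⟪a, θ - θstar⟫ = ⟪a, θ⟫ - ⟪a, θstar⟫ := inner_sub_right a θ θstar
  simp only [hinner, hsub]
  exact key U hU μ μ' hμmap hμd ℓ hderiv ⟪a, θstar⟫ ⟪a, θ⟫ hθsU hθU P hP hmean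
end
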